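/- arXiv:2402.04927 — 5 statements merged into one kernel-verified Lean document; each statement's English description precedes it below -/
import Mathlib

section
/- Let α ∈ (1,2) and let X₁, X₂, … be i.i.d. copies of X. Then for every real z > 0 and every integer t ≥ c^{1-α}, the probability P(∑_{i=1}^t X_i < z·C·t^{1/(α-1)}) is strictly greater than 7/8 − 1/z. -/
open MeasureTheory ProbabilityTheory Real Filter
open scoped ENNReal NNReal

/-- The normalising constant `β(α) = (∑_{i≥1} i^{-α})⁻¹` of the power law. -/
noncomputable def betaPL (α : ℝ) : ℝ := (∑' i : ℕ, ((i : ℝ) + 1) ^ (-α))⁻¹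

/-- The constant `c = ((α-1)/(8β))^{1/(1-α)}`. -/
noncomputable def cPL (α : ℝ) : ℝ := ((α - 1) / (8 * betaPL α)) ^ ((1 : ℝ) / (1 - α))

/-- `P(X < x)` for the power-law random variable `X`. -/
noncomputable def PXlt (α : ℝ) (x : ℝ) : ℝ :=
  ∑' i : ℕ, if ((i : ℝ) + 1) < x then betaPL α * ((i : ℝ) + 1) ^ (-α) else 0

/-- The constant `C = C(α,t) = β (2c)^{2-α} / ((2-α) P(X < c t^{1/(α-1)} + 1))`. -/
noncomputable def CPL (α : ℝ) (t : ℕ) : ℝ :=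
  betaPL α * (2 * cPL α) ^ (2 - α) /
    ((2 - α) * PXlt α (cPL α * (t : ℝ) ^ (1 / (α - 1)) + 1))

lemma summablePL {α : ℝ} (hα : 1 < α) : Summable (fun i : ℕ => ((i:ℝ)+1) ^ (-α)) := by
  have h : Summable (fun n : ℕ => (n : ℝ) ^ (-α)) := Real.summable_nat_rpow.2 (by linarith)
  have := (summable_nat_add_iff 1).2 h
  simpa using this

lemma rpow_mvt (p a b : ℝ) (ha : 0 < a) (hab : a < b) :
    ∃ ξ ∈ Set.Ioo a b, b ^ p - a ^ p = p * ξ ^ (p - 1) * (b - a) := by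
  have hcont : ContinuousOn (fun x : ℝ => x ^ p) (Set.Icc a b) := by
    apply ContinuousOn.rpow_const continuousOn_id
    intro x hx
    exact Or.inl (ne_of_gt (lt_of_lt_of_le ha hx.1))
  have hderiv : ∀ x ∈ Set.Ioo a b, HasDerivAt (fun x : ℝ => x ^ p) (p * x ^ (p - 1)) x :=
    fun x hx => Real.hasDerivAt_rpow_const (Or.inl (ne_of_gt (ha.trans hx.1)))
  obtain ⟨ξ, hξ, h⟩ := exists_hasDerivAt_eq_slope (fun x : ℝ => x ^ p)
    (fun x => p * x ^ (p - 1)) hab hcont hderiv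
  refine ⟨ξ, hξ, ?_⟩
  have hba : b - a ≠ 0 := by linarith
  field_simp at h
  linarith [h]

lemma tail_term {α : ℝ} (hα : 1 < α) {x : ℝ} (hx : 0 < x) :
    (x+1) ^ (-α) ≤ (x ^ (1-α) - (x+1) ^ (1-α)) / (α-1) := by
  obtain ⟨ξ, hξ, h⟩ := rpow_mvt (1-α) x (x+1) hx (by linarith)
  have h1 : x ^ (1-α) - (x+1) ^ (1-α) = (α-1) * ξ ^ (-α) := by
    have : (1-α) - 1 = -α := by ring
    rw [this] at h; linarith [h]
  rw [h1]
  have hmono : (x+1) ^ (-α) ≤ ξ ^ (-α) :=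
    rpow_le_rpow_of_nonpos (hx.trans hξ.1) hξ.2.le (by linarith)
  have hpos : (0:ℝ) < α - 1 := by linarith
  rw [mul_comm, mul_div_assoc, div_self (ne_of_gt hpos), mul_one]
  exact hmono

lemma head_term {α : ℝ} (hα1 : 1 < α) (hα2 : α < 2) (j : ℕ) :
    ((j:ℝ)+1) ^ (1-α) ≤ (((j:ℝ)+1) ^ (2-α) - (j:ℝ) ^ (2-α)) / (2-α) := by
  have h2α : (0:ℝ) < 2 - α := by linarith
  rcases Nat.eq_zero_or_pos j with rfl | hj
  · simp only [Nat.cast_zero, zero_add, Real.one_rpow, Real.zero_rpow (ne_of_gt h2α)]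
    rw [le_div_iff₀ h2α]; nlinarith
  · have hjpos : (0:ℝ) < j := by exact_mod_cast hj
    obtain ⟨ξ, hξ, h⟩ := rpow_mvt (2-α) (j:ℝ) ((j:ℝ)+1) hjpos (by linarith)
    have h1 : ((j:ℝ)+1) ^ (2-α) - (j:ℝ) ^ (2-α) = (2-α) * ξ ^ (1-α) := by
      have : (2-α) - 1 = 1-α := by ring
      rw [this] at h; linarith [h]
    rw [h1, mul_comm, mul_div_assoc, div_self (ne_of_gt h2α), mul_one]
    exact rpow_le_rpow_of_nonpos (hjpos.trans hξ.1) hξ.2.le (by linarith)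

lemma head_sum {α : ℝ} (hα1 : 1 < α) (hα2 : α < 2) (s : ℕ) :
    ∑ j ∈ Finset.range s, ((j:ℝ)+1) ^ (1-α) ≤ (s:ℝ) ^ (2-α) / (2-α) := by
  have h2α : (0:ℝ) < 2 - α := by linarith
  induction s with
  | zero => simp [Real.zero_rpow (ne_of_gt h2α)]
  | succ n ih =>
      rw [Finset.sum_range_succ]
      have := head_term hα1 hα2 n
      have hcast : ((n+1:ℕ):ℝ) = (n:ℝ)+1 := by push_cast; ring
      rw [hcast]
      calc ∑ j ∈ Finset.range n, ((j:ℝ)+1) ^ (1-α) + ((n:ℝ)+1) ^ (1-α)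
          ≤ (n:ℝ) ^ (2-α) / (2-α) + (((n:ℝ)+1) ^ (2-α) - (n:ℝ) ^ (2-α)) / (2-α) := by
            exact add_le_add ih this
        _ = ((n:ℝ)+1) ^ (2-α) / (2-α) := by ring

lemma tail_sum {α : ℝ} (hα : 1 < α) (s : ℕ) (hs : 1 ≤ s) :
    ∑' j:ℕ, ((j:ℝ)+(s:ℝ)+1) ^ (-α) ≤ (s:ℝ) ^ (1-α) / (α-1) := by
  have hα1 : (0:ℝ) < α - 1 := by linarith
  apply Real.tsum_le_of_sum_range_le
  · intro n; positivity
  · intro n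
    have key : ∀ N : ℕ, ∑ j ∈ Finset.range N, ((j:ℝ)+(s:ℝ)+1) ^ (-α)
        ≤ ((s:ℝ) ^ (1-α) - ((s:ℝ)+(N:ℝ)) ^ (1-α)) / (α-1) := by
      intro N
      induction N with
      | zero => simp
      | succ K ih =>
          rw [Finset.sum_range_succ]
          have hx : (0:ℝ) < (K:ℝ)+(s:ℝ) := by
            have : (1:ℝ) ≤ (s:ℝ) := by exact_mod_cast hs
            linarith [Nat.cast_nonneg (α := ℝ) K]
          have := tail_term hα hx
          calc ∑ j ∈ Finset.range K, ((j:ℝ)+(s:ℝ)+1) ^ (-α) + ((K:ℝ)+(s:ℝ)+1) ^ (-α)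
              ≤ ((s:ℝ) ^ (1-α) - ((s:ℝ)+(K:ℝ)) ^ (1-α)) / (α-1)
                + (((K:ℝ)+(s:ℝ)) ^ (1-α) - ((K:ℝ)+(s:ℝ)+1) ^ (1-α)) / (α-1) := by
                  exact add_le_add ih this
            _ = ((s:ℝ) ^ (1-α) - ((s:ℝ)+((K:ℕ):ℝ)+1) ^ (1-α)) / (α-1) := by
                  rw [show (K:ℝ)+(s:ℝ) = (s:ℝ)+(K:ℝ) by ring,
                      show (s:ℝ)+(K:ℝ)+1 = (K:ℝ)+(s:ℝ)+1 by ring]; ring_nf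
            _ = ((s:ℝ) ^ (1-α) - ((s:ℝ)+((K+1:ℕ):ℝ)) ^ (1-α)) / (α-1) := by push_cast; ring_nf
    calc ∑ j ∈ Finset.range n, ((j:ℝ)+(s:ℝ)+1) ^ (-α)
        ≤ ((s:ℝ) ^ (1-α) - ((s:ℝ)+(n:ℝ)) ^ (1-α)) / (α-1) := key n
      _ ≤ (s:ℝ) ^ (1-α) / (α-1) := by
          have h0 : (0:ℝ) ≤ ((s:ℝ)+(n:ℝ)) ^ (1-α) := Real.rpow_nonneg (by positivity) _
          gcongr
          linarith

theorem sum_iid_powerlaw_upper_bound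
    {Ω : Type*} [MeasurableSpace Ω] (μ : Measure Ω) [IsProbabilityMeasure μ]
    (α : ℝ) (hα : α ∈ Set.Ioo (1 : ℝ) 2)
    (X : ℕ → Ω → ℕ) (hmeas : ∀ n, Measurable (X n))
    (hdist : ∀ n, ∀ i : ℕ, 1 ≤ i →
      μ {ω | X n ω = i} = ENNReal.ofReal (betaPL α * (i : ℝ) ^ (-α)))
    (hindep : iIndepFun X μ)
    (z : ℝ) (hz : 0 < z) (t : ℕ) (ht : cPL α ^ (1 - α) ≤ (t : ℝ)) :
    (7 / 8 - 1 / z : ℝ) <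
      (μ {ω | (∑ i ∈ Finset.Icc 1 t, (X i ω : ℝ)) <
          z * CPL α t * (t : ℝ) ^ (1 / (α - 1))}).toReal := by
  obtain ⟨hα1, hα2⟩ := hα
  have hα1' : (0:ℝ) < α - 1 := by linarith
  have hα2' : (0:ℝ) < 2 - α := by linarith
  -- basic constants
  have hS : Summable (fun i : ℕ => ((i:ℝ)+1) ^ (-α)) := summablePL hα1
  have hS1 : (1:ℝ) ≤ ∑' i : ℕ, ((i:ℝ)+1) ^ (-α) := by
    have h0 : ((0:ℕ):ℝ) + 1 = 1 := by norm_num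
    have := Summable.le_tsum hS 0 (fun j _ => by positivity)
    simpa [h0] using this
  have hSpos : (0:ℝ) < ∑' i : ℕ, ((i:ℝ)+1) ^ (-α) := lt_of_lt_of_le one_pos hS1
  have hβpos : 0 < betaPL α := by rw [betaPL]; exact inv_pos.2 hSpos
  have hβS : betaPL α * (∑' i : ℕ, ((i:ℝ)+1) ^ (-α)) = 1 := by
    rw [betaPL]; exact inv_mul_cancel₀ (ne_of_gt hSpos)
  have hbase : (0:ℝ) < (α - 1) / (8 * betaPL α) := by positivity
  have hcpos : 0 < cPL α := Real.rpow_pos_of_pos hbase _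
  have hc1α : cPL α ^ (1-α) = (α - 1) / (8 * betaPL α) := by
    rw [cPL, ← Real.rpow_mul hbase.le, one_div,
      inv_mul_cancel₀ (by linarith : (1:ℝ) - α ≠ 0), Real.rpow_one]
  -- t facts
  have htpos : (0:ℝ) < (t:ℝ) := lt_of_lt_of_le (by rw [hc1α]; positivity) ht
  have hT : (0:ℝ) < (t:ℝ) ^ ((1:ℝ)/(α-1)) := Real.rpow_pos_of_pos htpos _
  set T := (t:ℝ) ^ ((1:ℝ)/(α-1)) with hTdef
  set m := cPL α * T with hmdef
  have hm1 : 1 ≤ m := by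
    have h1 : (cPL α ^ (1-α)) ^ ((1:ℝ)/(α-1)) ≤ T := by
      rw [hTdef]
      exact Real.rpow_le_rpow (by positivity) ht (by positivity)
    have h2 : (cPL α ^ (1-α)) ^ ((1:ℝ)/(α-1)) = (cPL α)⁻¹ := by
      rw [← Real.rpow_mul hcpos.le,
        show (1-α) * ((1:ℝ)/(α-1)) = -1 by
          rw [mul_one_div, div_eq_iff (by linarith : α - 1 ≠ 0)]; ring,
        Real.rpow_neg_one]
    rw [h2] at h1
    calc (1:ℝ) = cPL α * (cPL α)⁻¹ := (mul_inv_cancel₀ (ne_of_gt hcpos)).symm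
      _ ≤ cPL α * T := by gcongr
  have hm0 : 0 < m := lt_of_lt_of_le one_pos hm1
  set s := Nat.ceil m with hsdef
  have hms : m ≤ (s:ℝ) := Nat.le_ceil m
  have hs1 : 1 ≤ s := by
    rw [hsdef]; exact Nat.one_le_ceil_iff.2 hm0
  have hsm1 : (s:ℝ) ≤ m + 1 := by
    rw [hsdef]; exact (Nat.ceil_lt_add_one hm0.le).le
  have hmα : m ^ (1-α) = cPL α ^ (1-α) * (t:ℝ)⁻¹ := by
    rw [hmdef, Real.mul_rpow hcpos.le hT.le, hTdef, ← Real.rpow_mul htpos.le,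
      show (1:ℝ)/(α-1) * (1-α) = -1 by
        rw [div_mul_eq_mul_div, div_eq_iff (by linarith : α - 1 ≠ 0)]; ring,
      Real.rpow_neg_one]
  have h2m : (2*m) ^ (2-α) = (2*cPL α) ^ (2-α) * (t:ℝ) ^ ((2-α)/(α-1)) := by
    rw [hmdef, show 2 * (cPL α * T) = (2 * cPL α) * T by ring,
      Real.mul_rpow (by positivity) hT.le, hTdef, ← Real.rpow_mul htpos.le,
      show (1:ℝ)/(α-1) * (2-α) = (2-α)/(α-1) by ring]
  -- measurability of level sets
  have hXm : ∀ n (k:ℕ), MeasurableSet {ω | X n ω = k} :=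
    fun n k => hmeas n (measurableSet_singleton k)
  -- distribution, reindexed
  have hd : ∀ n (j:ℕ), μ {ω | X n ω = j+1} = ENNReal.ofReal (betaPL α * ((j:ℝ)+1) ^ (-α)) := by
    intro n j
    have := hdist n (j+1) (by omega)
    rwa [show ((j+1:ℕ):ℝ) = (j:ℝ)+1 by push_cast; ring] at this
  -- summability of shifted tail
  have hSs : Summable (fun j : ℕ => ((j:ℝ)+(s:ℝ)+1) ^ (-α)) := by
    have := (summable_nat_add_iff s).2 hS
    apply this.congr
    intro j; push_cast; ring_nf
  -- tail bound for each coordinate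
  have htail : ∀ n, μ {ω | m + 1 ≤ (X n ω:ℝ)} ≤ ENNReal.ofReal (1/(8*(t:ℝ))) := by
    intro n
    have hset : {ω | m + 1 ≤ (X n ω:ℝ)} = ⋃ j:ℕ, {ω | X n ω = j + s + 1} := by
      ext ω
      simp only [Set.mem_setOf_eq, Set.mem_iUnion]
      constructor
      · intro h
        have hk1 : 1 ≤ X n ω := by
          by_contra hc
          push_neg at hc
          interval_cases h' : X n ω
          · push_cast at h; linarith
        have hcast : ((X n ω - 1:ℕ):ℝ) = (X n ω:ℝ) - 1 := by
          rw [Nat.cast_sub hk1]; norm_num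
        have hsle : s ≤ X n ω - 1 := by
          rw [hsdef]
          apply Nat.ceil_le.2
          rw [hcast]; linarith
        exact ⟨X n ω - (s+1), by omega⟩
      · rintro ⟨j, hj⟩
        rw [hj]
        push_cast
        have := hms
        have : (0:ℝ) ≤ (j:ℝ) := Nat.cast_nonneg j
        linarith [Nat.le_ceil m]
    have hdisj : Pairwise (Function.onFun Disjoint (fun j => {ω | X n ω = j + s + 1})) := by
      intro i j hij
      simp only [Function.onFun]
      apply Set.disjoint_left.2
      intro ω h1 h2
      simp only [Set.mem_setOf_eq] at h1 h2
      omega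
    rw [hset, measure_iUnion hdisj (fun j => hXm n _)]
    have hterm : ∀ j : ℕ, μ {ω | X n ω = j + s + 1}
        = ENNReal.ofReal (betaPL α * ((j:ℝ)+(s:ℝ)+1) ^ (-α)) := by
      intro j
      have := hd n (j+s)
      rwa [show j + s + 1 = (j+s)+1 by ring, show ((j+s:ℕ):ℝ) = (j:ℝ)+(s:ℝ) by push_cast; ring]
        at this
    calc ∑' j : ℕ, μ {ω | X n ω = j + s + 1}
        = ∑' j : ℕ, ENNReal.ofReal (betaPL α * ((j:ℝ)+(s:ℝ)+1) ^ (-α)) := tsum_congr hterm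
      _ = ENNReal.ofReal (∑' j : ℕ, betaPL α * ((j:ℝ)+(s:ℝ)+1) ^ (-α)) :=
          (ENNReal.ofReal_tsum_of_nonneg (fun j => by positivity) (hSs.mul_left _)).symm
      _ ≤ ENNReal.ofReal (1/(8*(t:ℝ))) := by
          apply ENNReal.ofReal_le_ofReal
          rw [tsum_mul_left]
          have h1 : ∑' j:ℕ, ((j:ℝ)+(s:ℝ)+1) ^ (-α) ≤ (s:ℝ) ^ (1-α) / (α-1) :=
            tail_sum hα1 s hs1
          have h2 : (s:ℝ) ^ (1-α) ≤ m ^ (1-α) :=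
            rpow_le_rpow_of_nonpos hm0 hms (by linarith)
          have h3 : betaPL α * (∑' j:ℕ, ((j:ℝ)+(s:ℝ)+1) ^ (-α))
              ≤ betaPL α * (m ^ (1-α) / (α-1)) := by
            apply mul_le_mul_of_nonneg_left _ hβpos.le
            calc ∑' j:ℕ, ((j:ℝ)+(s:ℝ)+1) ^ (-α) ≤ (s:ℝ) ^ (1-α) / (α-1) := h1
              _ ≤ m ^ (1-α) / (α-1) := by gcongr
          refine h3.trans_eq ?_
          rw [hmα, hc1α]
          field_simp
  -- bad event
  set Bad := ⋃ i ∈ Finset.Icc 1 t, {ω | m + 1 ≤ (X i ω:ℝ)} with hBadDef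
  have ht8 : (0:ℝ) < 8 * (t:ℝ) := by positivity
  have hBad : μ Bad ≤ ENNReal.ofReal (1/8) := by
    calc μ Bad ≤ ∑ i ∈ Finset.Icc 1 t, μ {ω | m + 1 ≤ (X i ω:ℝ)} :=
          measure_biUnion_finset_le _ _
      _ ≤ ∑ i ∈ Finset.Icc 1 t, ENNReal.ofReal (1/(8*(t:ℝ))) :=
          Finset.sum_le_sum (fun i _ => htail i)
      _ = (t : ℝ≥0∞) * ENNReal.ofReal (1/(8*(t:ℝ))) := by
          rw [Finset.sum_const, Nat.card_Icc]
          simp [nsmul_eq_mul]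
      _ = ENNReal.ofReal (1/8) := by
          rw [← ENNReal.ofReal_natCast t, ← ENNReal.ofReal_mul (Nat.cast_nonneg t)]
          congr 1
          field_simp
  -- truncated variables
  set Z : ℕ → Ω → ℝ :=
    fun n ω => ∑ j ∈ Finset.range s, Set.indicator {ω' | X n ω' = j+1} (fun _ => ((j:ℝ)+1)) ω
    with hZdef
  have hZmeas : ∀ n, Measurable (Z n) :=
    fun n => Finset.measurable_sum _ (fun j _ => (measurable_const.indicator (hXm n _)))
  have hZnonneg : ∀ n ω, 0 ≤ Z n ω :=
    fun n ω => Finset.sum_nonneg (fun j _ =>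
      Set.indicator_nonneg (fun _ _ => by positivity) ω)
  have hZint : ∀ n, Integrable (Z n) μ :=
    fun n => integrable_finset_sum _ (fun j _ => (integrable_const _).indicator (hXm n _))
  have hZval : ∀ n, ∫ ω, Z n ω ∂μ = betaPL α * ∑ j ∈ Finset.range s, ((j:ℝ)+1) ^ (1-α) := by
    intro n
    rw [hZdef, integral_finset_sum _ (fun j _ => (integrable_const _).indicator (hXm n _))]
    rw [Finset.mul_sum]
    apply Finset.sum_congr rfl
    intro j _
    rw [integral_indicator_const _ (hXm n (j+1)), measureReal_def, hd n j, smul_eq_mul,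
      ENNReal.toReal_ofReal (by positivity)]
    rw [show (1:ℝ) - α = -α + 1 by ring, Real.rpow_add (by positivity) (-α) 1,
      Real.rpow_one]
    ring
  -- Z equals X below the truncation
  have hZeq : ∀ n ω, (X n ω:ℝ) < m + 1 → Z n ω = (X n ω:ℝ) := by
    intro n ω h
    rcases Nat.eq_zero_or_pos (X n ω) with h0 | h1
    · rw [hZdef]
      simp only []
      rw [Finset.sum_eq_zero, h0, Nat.cast_zero]
      intro j _
      apply Set.indicator_of_notMem
      simp only [Set.mem_setOf_eq, h0]
      omega
    · have hks : X n ω - 1 < s := by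
        have hc1 : ((X n ω - 1:ℕ):ℝ) = (X n ω:ℝ) - 1 := by
          rw [Nat.cast_sub h1]; norm_num
        have hcm : ((X n ω - 1:ℕ):ℝ) < (s:ℝ) := by
          rw [hc1]
          calc (X n ω:ℝ) - 1 < m := by linarith
            _ ≤ (s:ℝ) := hms
        exact_mod_cast hcm
      rw [hZdef]
      simp only []
      rw [Finset.sum_eq_single (X n ω - 1)]
      · rw [Set.indicator_of_mem (by simp only [Set.mem_setOf_eq]; omega)]
        rw [Nat.cast_sub h1]; norm_num
      · intro j _ hj
        apply Set.indicator_of_notMem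
        simp only [Set.mem_setOf_eq]
        omega
      · intro hk
        exact absurd (Finset.mem_range.2 hks) hk
  -- facts about P = PXlt α (m+1)
  have hQsum : Summable (fun j : ℕ => if ((j:ℝ)+1) < m + 1 then ((j:ℝ)+1) ^ (-α) else 0) := by
    apply Summable.of_nonneg_of_le _ _ hS
    · intro j; split <;> positivity
    · intro j; split
      · exact le_refl _
      · positivity
  have hPQ : PXlt α (m+1)
      = betaPL α * ∑' j : ℕ, (if ((j:ℝ)+1) < m + 1 then ((j:ℝ)+1) ^ (-α) else 0) := by
    rw [PXlt, ← tsum_mul_left]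
    apply tsum_congr
    intro j
    split <;> simp
  have hQlt : (∑' j : ℕ, (if ((j:ℝ)+1) < m + 1 then ((j:ℝ)+1) ^ (-α) else 0))
      < ∑' i : ℕ, ((i:ℝ)+1) ^ (-α) := by
    apply Summable.tsum_lt_tsum_of_nonneg (i := s)
    · intro b; split <;> positivity
    · intro b; split
      · exact le_refl _
      · positivity
    · rw [if_neg (by push_neg; linarith [hms])]
      positivity
    · exact hS
  have hP1 : PXlt α (m+1) < 1 := by
    rw [hPQ]
    calc betaPL α * ∑' j : ℕ, (if ((j:ℝ)+1) < m + 1 then ((j:ℝ)+1) ^ (-α) else 0)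
        < betaPL α * ∑' i : ℕ, ((i:ℝ)+1) ^ (-α) := mul_lt_mul_of_pos_left hQlt hβpos
      _ = 1 := hβS
  have hQ1 : (1:ℝ) ≤ ∑' j : ℕ, (if ((j:ℝ)+1) < m + 1 then ((j:ℝ)+1) ^ (-α) else 0) := by
    have h0 : (if (((0:ℕ):ℝ)+1) < m + 1 then (((0:ℕ):ℝ)+1) ^ (-α) else 0) = 1 := by
      rw [if_pos (by push_cast; linarith)]
      norm_num
    have := Summable.le_tsum hQsum 0 (fun j _ => by split <;> positivity)
    rw [h0] at this
    exact this
  have hPpos : 0 < PXlt α (m+1) := by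
    rw [hPQ]
    exact mul_pos hβpos (lt_of_lt_of_le one_pos hQ1)
  -- the constant C and threshold a
  have hCdef : CPL α t = betaPL α * (2 * cPL α) ^ (2-α) / ((2-α) * PXlt α (m+1)) := by
    rw [CPL]
  have hCpos : 0 < CPL α t := by
    rw [hCdef]
    have h2c : (0:ℝ) < (2 * cPL α) ^ (2-α) := Real.rpow_pos_of_pos (by linarith) _
    positivity
  set a := z * CPL α t * T with hadef
  have hapos : 0 < a := by
    rw [hadef]; positivity
  -- Markov's inequality for the truncated sum
  set W : Ω → ℝ := fun ω => ∑ i ∈ Finset.Icc 1 t, Z i ω with hWdef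
  have hWint : Integrable W μ := integrable_finset_sum _ (fun i _ => hZint i)
  have hWval : ∫ ω, W ω ∂μ
      = (t:ℝ) * (betaPL α * ∑ j ∈ Finset.range s, ((j:ℝ)+1) ^ (1-α)) := by
    rw [hWdef, integral_finset_sum _ (fun i _ => hZint i)]
    rw [Finset.sum_congr rfl (fun i _ => hZval i), Finset.sum_const, Nat.card_Icc]
    simp [nsmul_eq_mul]
  have hIntBound : ∫ ω, W ω ∂μ ≤ CPL α t * PXlt α (m+1) * T := by
    rw [hWval]
    have h1 : ∑ j ∈ Finset.range s, ((j:ℝ)+1) ^ (1-α) ≤ (s:ℝ) ^ (2-α) / (2-α) :=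
      head_sum hα1 hα2 s
    have h2 : (s:ℝ) ^ (2-α) ≤ (2*m) ^ (2-α) :=
      Real.rpow_le_rpow (Nat.cast_nonneg s) (by linarith) (by linarith)
    have h3 : (t:ℝ) * (betaPL α * ∑ j ∈ Finset.range s, ((j:ℝ)+1) ^ (1-α))
        ≤ (t:ℝ) * (betaPL α * ((2*m) ^ (2-α) / (2-α))) := by
      apply mul_le_mul_of_nonneg_left _ htpos.le
      apply mul_le_mul_of_nonneg_left _ hβpos.le
      calc ∑ j ∈ Finset.range s, ((j:ℝ)+1) ^ (1-α) ≤ (s:ℝ) ^ (2-α) / (2-α) := h1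
        _ ≤ (2*m) ^ (2-α) / (2-α) := by gcongr
    refine h3.trans_eq ?_
    have hexp : (t:ℝ) * (t:ℝ) ^ ((2-α)/(α-1)) = (t:ℝ) ^ ((1:ℝ)/(α-1)) := by
      rw [show (t:ℝ) * (t:ℝ) ^ ((2-α)/(α-1)) = (t:ℝ) ^ (1:ℝ) * (t:ℝ) ^ ((2-α)/(α-1)) by
            rw [Real.rpow_one],
        ← Real.rpow_add htpos,
        show (1:ℝ) + (2-α)/(α-1) = 1/(α-1) by field_simp; ring]
    rw [h2m, hCdef, hTdef, ← hexp]
    have hP : PXlt α (m+1) ≠ 0 := ne_of_gt hPpos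
    field_simp
  have hmarkov : (μ {ω | a ≤ W ω}).toReal ≤ PXlt α (m+1) / z := by
    have hW0 : 0 ≤ᵐ[μ] W :=
      Filter.Eventually.of_forall (fun ω => Finset.sum_nonneg (fun i _ => hZnonneg i ω))
    have := mul_meas_ge_le_integral_of_nonneg hW0 hWint a
    have h2 : a * (μ {ω | a ≤ W ω}).toReal ≤ CPL α t * PXlt α (m+1) * T :=
      this.trans hIntBound
    have h3 : CPL α t * PXlt α (m+1) * T = a * (PXlt α (m+1) / z) := by
      rw [hadef]
      field_simp
    rw [h3] at h2
    exact le_of_mul_le_mul_left h2 hapos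
  -- final assembly
  set A := {ω | (∑ i ∈ Finset.Icc 1 t, (X i ω : ℝ)) < a} with hAdef
  have hAmeas : MeasurableSet A := by
    rw [hAdef]
    exact measurableSet_lt
      (Finset.measurable_sum _ (fun i _ => measurable_from_top.comp (hmeas i)))
      measurable_const
  have hMmeas : MeasurableSet {ω | a ≤ W ω} :=
    measurableSet_le measurable_const (Finset.measurable_sum _ (fun i _ => hZmeas i))
  have hsub : Aᶜ ⊆ Bad ∪ {ω | a ≤ W ω} := by
    intro ω hω
    rw [hAdef] at hω
    simp only [Set.mem_compl_iff, Set.mem_setOf_eq, not_lt] at hω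
    by_cases hb : ω ∈ Bad
    · exact Or.inl hb
    · right
      rw [hBadDef] at hb
      simp only [Set.mem_iUnion, Set.mem_setOf_eq] at hb
      push_neg at hb
      have hWX : W ω = ∑ i ∈ Finset.Icc 1 t, (X i ω : ℝ) := by
        rw [hWdef]
        exact Finset.sum_congr rfl (fun i hi => hZeq i ω (hb i hi))
      simp only [Set.mem_setOf_eq]
      rw [hWX]
      exact hω
  have hcompl : μ Aᶜ ≤ ENNReal.ofReal (1/8) + μ {ω | a ≤ W ω} := by
    calc μ Aᶜ ≤ μ (Bad ∪ {ω | a ≤ W ω}) := measure_mono hsub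
      _ ≤ μ Bad + μ {ω | a ≤ W ω} := measure_union_le _ _
      _ ≤ _ := add_le_add hBad le_rfl
  have hfin1 : μ {ω | a ≤ W ω} ≠ ⊤ := measure_ne_top μ _
  have htoReal : (μ Aᶜ).toReal ≤ 1/8 + PXlt α (m+1)/z := by
    have h1 : (μ Aᶜ).toReal ≤ (ENNReal.ofReal (1/8) + μ {ω | a ≤ W ω}).toReal :=
      ENNReal.toReal_mono (ENNReal.add_ne_top.2 ⟨ENNReal.ofReal_ne_top, hfin1⟩) hcompl
    rw [ENNReal.toReal_add ENNReal.ofReal_ne_top hfin1,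
      ENNReal.toReal_ofReal (by norm_num)] at h1
    linarith [hmarkov]
  have hsum1 : (μ A).toReal + (μ Aᶜ).toReal = 1 := by
    have h0 := measure_add_measure_compl (μ := μ) hAmeas
    have h2 := congrArg ENNReal.toReal h0
    rw [ENNReal.toReal_add (measure_ne_top μ A) (measure_ne_top μ Aᶜ)] at h2
    simpa using h2
  have hPz : PXlt α (m+1) / z < 1 / z := by gcongr
  linarith
end

section
/- Let α ∈ (1,2), let t ≥ c^{1-α} be an integer with 16·C·t^{1/(α−1)} > 1, and let X₁, …, X_t be i.i.d. copies of X. Then the probability that there exists some 1 ≤ j ≤ t with X_j ≥ 16·C·t^{1/(α−1)} is at least 1 − exp(−β·(32C)^{1−α}/(α−1)). -/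
open MeasureTheory ProbabilityTheory Real Filter
open scoped ENNReal

lemma betaPL_pos {α : ℝ} (hα : 1 < α) : 0 < betaPL α := by
  have hs : Summable (fun i : ℕ => ((i : ℝ) + 1) ^ (-α)) := by
    have h0 : Summable (fun i : ℕ => (i : ℝ) ^ (-α)) :=
      Real.summable_nat_rpow.2 (by linarith)
    have := (summable_nat_add_iff 1).2 h0
    refine this.congr fun i => ?_
    push_cast
    ring_nf
  refine inv_pos.2 (Summable.tsum_pos hs (fun i => Real.rpow_nonneg (by positivity) _) 0 ?_)
  · positivity

theorem exists_large_initial_degree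
    {Ω : Type*} [MeasurableSpace Ω] (μ : Measure Ω) [IsProbabilityMeasure μ]
    (α : ℝ) (hα : α ∈ Set.Ioo (1 : ℝ) 2)
    (X : ℕ → Ω → ℕ) (hmeas : ∀ n, Measurable (X n))
    (hdist : ∀ n, ∀ i : ℕ, 1 ≤ i →
      μ {ω | X n ω = i} = ENNReal.ofReal (betaPL α * (i : ℝ) ^ (-α)))
    (hindep : iIndepFun X μ)
    (t : ℕ) (ht : cPL α ^ (1 - α) ≤ (t : ℝ))
    (hbig : 1 < 16 * CPL α t * (t : ℝ) ^ (1 / (α - 1))) :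
    1 - Real.exp (-(betaPL α * (32 * CPL α t) ^ (1 - α) / (α - 1))) ≤
      (μ {ω | ∃ j ∈ Finset.Icc 1 t,
          16 * CPL α t * (t : ℝ) ^ (1 / (α - 1)) ≤ (X j ω : ℝ)}).toReal := by
  obtain ⟨hα1, hα2⟩ := hα
  have hβ : 0 < betaPL α := betaPL_pos hα1
  set β := betaPL α with hβdef
  set C := CPL α t with hCdef
  set M : ℝ := 16 * C * (t : ℝ) ^ (1 / (α - 1)) with hMdef
  have hM1 : 1 < M := hbig
  have ht0 : 0 < t := by
    by_contra h
    have h0 : (t : ℝ) = 0 := by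
      simp [Nat.le_zero.1 (not_lt.1 h)]
    have hαne : 1 / (α - 1) ≠ 0 := by
      have : (0:ℝ) < α - 1 := by linarith
      positivity
    rw [hMdef, h0, Real.zero_rpow hαne] at hM1
    linarith
  -- the integer threshold
  set m : ℕ := ⌈M⌉₊ with hmdef
  have hMm : M ≤ (m : ℝ) := Nat.le_ceil M
  have hm1 : 1 ≤ m := by
    rw [hmdef]
    exact Nat.ceil_pos.mpr (by linarith)
  have hm1R : (1:ℝ) ≤ (m:ℝ) := by exact_mod_cast hm1
  have hm2M : (m : ℝ) < 2 * M := by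
    have := Nat.ceil_lt_add_one (le_of_lt (lt_trans one_pos hM1))
    calc (m:ℝ) < M + 1 := this
    _ < 2 * M := by linarith
  set τ : ℝ := β * (2 * M) ^ (1 - α) / (α - 1) with hτdef
  have hτpos : 0 < τ := by
    apply div_pos (mul_pos hβ (Real.rpow_pos_of_pos (by linarith) _)) (by linarith)
  -- the tail lower bound
  have key : ∀ n : ℕ, ENNReal.ofReal τ ≤ μ {ω | M ≤ (X n ω : ℝ)} := by
    intro n
    have hδ : (0:ℝ) < (m:ℝ) ^ (1 - α) - (2 * M) ^ (1 - α) := by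
      have := Real.rpow_lt_rpow_of_neg (by linarith : (0:ℝ) < (m:ℝ)) hm2M
        (by linarith : 1 - α < 0)
      linarith
    set δ : ℝ := (m:ℝ) ^ (1 - α) - (2 * M) ^ (1 - α) with hδdef
    -- pick a cutoff N
    have htend : Tendsto (fun N : ℕ => ((m:ℝ) + N) ^ (1 - α)) atTop (nhds 0) := by
      have h1 : Tendsto (fun x : ℝ => x ^ (-(α - 1))) atTop (nhds 0) :=
        tendsto_rpow_neg_atTop (by linarith)
      have h2 : Tendsto (fun N : ℕ => (m:ℝ) + N) atTop atTop :=
        tendsto_atTop_add_const_left _ _ tendsto_natCast_atTop_atTop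
      have h3 := h1.comp h2
      have he : (1 - α) = -(α - 1) := by ring
      rw [he]
      exact h3
    obtain ⟨N, hN⟩ := (htend.eventually (eventually_le_nhds hδ)).exists
    -- sum-integral comparison
    have hanti : AntitoneOn (fun x : ℝ => x ^ (-α)) (Set.Icc (m:ℝ) ((m:ℝ) + N)) := by
      intro a ha b hb hab
      exact Real.rpow_le_rpow_of_nonpos (lt_of_lt_of_le (by linarith) ha.1) hab
        (by linarith)
    have hint := hanti.integral_le_sum
    have hval : (∫ x in (m:ℝ)..((m:ℝ) + N), x ^ (-α)) =
        ((m:ℝ) ^ (1 - α) - ((m:ℝ) + N) ^ (1 - α)) / (α - 1) := by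
      rw [integral_rpow]
      · have hne : α - 1 ≠ 0 := by linarith
        have h1 : -α + 1 = 1 - α := by ring
        have h2 : (1:ℝ) - α = -(α - 1) := by ring
        rw [h1, h2, div_neg, ← neg_div, neg_sub]
      · refine Or.inr ⟨fun h => by have : α = 1 := neg_injective h; linarith, ?_⟩
        rw [Set.uIcc_of_le (by linarith : (m:ℝ) ≤ (m:ℝ) + N)]
        intro h
        have := (Set.mem_Icc.1 h).1
        linarith
    have hsum : τ ≤ ∑ i ∈ Finset.range N, β * ((m:ℝ) + i) ^ (-α) := by
      rw [← Finset.mul_sum]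
      have h2 : ((m:ℝ) ^ (1 - α) - ((m:ℝ) + N) ^ (1 - α)) / (α - 1) ≥
          (2 * M) ^ (1 - α) / (α - 1) := by
        apply div_le_div_of_nonneg_right ?_ ?_
        · linarith
        · linarith
      have h3 : (2 * M) ^ (1 - α) / (α - 1) ≤
          ∑ i ∈ Finset.range N, ((m:ℝ) + i) ^ (-α) := by
        calc (2 * M) ^ (1 - α) / (α - 1)
            ≤ ((m:ℝ) ^ (1 - α) - ((m:ℝ) + N) ^ (1 - α)) / (α - 1) := h2
          _ = ∫ x in (m:ℝ)..((m:ℝ) + N), x ^ (-α) := hval.symm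
          _ ≤ _ := hint
      calc τ = β * ((2 * M) ^ (1 - α) / (α - 1)) := by rw [hτdef]; ring
        _ ≤ β * ∑ i ∈ Finset.range N, ((m:ℝ) + i) ^ (-α) :=
            mul_le_mul_of_nonneg_left h3 hβ.le
    -- the measure of the union of atoms
    have hsub : (⋃ i ∈ Finset.range N, {ω | X n ω = m + i}) ⊆
        {ω | M ≤ (X n ω : ℝ)} := by
      intro ω hω
      simp only [Set.mem_iUnion, Set.mem_setOf_eq] at hω ⊢
      obtain ⟨i, _, hi⟩ := hω
      rw [hi]
      push_cast
      have : (0:ℝ) ≤ i := by positivity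
      linarith
    have hdisj : (↑(Finset.range N) : Set ℕ).PairwiseDisjoint
        (fun i => {ω | X n ω = m + i}) := by
      intro i _ j _ hij
      refine Set.disjoint_left.2 fun ω h1 h2 => hij ?_
      simp only [Set.mem_setOf_eq] at h1 h2
      omega
    have hmb : ∀ i ∈ Finset.range N, MeasurableSet {ω | X n ω = m + i} := by
      intro i _
      have : {ω | X n ω = m + i} = X n ⁻¹' {m + i} := rfl
      rw [this]
      exact hmeas n MeasurableSpace.measurableSet_top
    calc ENNReal.ofReal τ
        ≤ ENNReal.ofReal (∑ i ∈ Finset.range N, β * ((m:ℝ) + i) ^ (-α)) :=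
          ENNReal.ofReal_le_ofReal hsum
      _ = ∑ i ∈ Finset.range N, ENNReal.ofReal (β * ((m:ℝ) + i) ^ (-α)) :=
          ENNReal.ofReal_sum_of_nonneg fun i _ => by positivity
      _ = ∑ i ∈ Finset.range N, μ {ω | X n ω = m + i} := by
          refine Finset.sum_congr rfl fun i _ => ?_
          rw [hdist n (m + i) (le_trans hm1 (Nat.le_add_right _ _))]
          push_cast
          ring_nf
      _ = μ (⋃ i ∈ Finset.range N, {ω | X n ω = m + i}) :=
          (measure_biUnion_finset hdisj hmb).symm
      _ ≤ μ {ω | M ≤ (X n ω : ℝ)} := measure_mono hsub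
  -- τ is at most 1
  have hτ1 : τ ≤ 1 := by
    have := le_trans (key 1) (prob_le_one)
    exact ENNReal.ofReal_le_one.1 this
  -- the complement event, via independence
  set A : ℕ → Set Ω := fun j => X j ⁻¹' {k : ℕ | M ≤ (k : ℝ)} with hAdef
  have hAmeas : ∀ j, MeasurableSet (A j) := fun j =>
    hmeas j (MeasurableSpace.measurableSet_top)
  have hAeq : ∀ j, A j = {ω | M ≤ (X j ω : ℝ)} := fun j => rfl
  have hprod : μ (⋂ j ∈ Finset.Icc 1 t, (A j)ᶜ) = ∏ j ∈ Finset.Icc 1 t, μ ((A j)ᶜ) := by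
    refine hindep.meas_biInter fun j _ => ?_
    exact ⟨{k : ℕ | M ≤ (k : ℝ)}ᶜ, MeasurableSpace.measurableSet_top, rfl⟩
  have hfac : ∀ j, μ ((A j)ᶜ) ≤ ENNReal.ofReal (Real.exp (-τ)) := by
    intro j
    have h1 : μ ((A j)ᶜ) = 1 - μ (A j) := prob_compl_eq_one_sub (hAmeas j)
    have h2 : μ ((A j)ᶜ) ≤ 1 - ENNReal.ofReal τ := by
      rw [h1]
      exact tsub_le_tsub_left (by rw [hAeq j]; exact key j) 1
    have h3 : (1 : ℝ≥0∞) - ENNReal.ofReal τ = ENNReal.ofReal (1 - τ) := by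
      rw [ENNReal.ofReal_sub _ hτpos.le, ENNReal.ofReal_one]
    have h4 : (1 : ℝ) - τ ≤ Real.exp (-τ) := by
      have := Real.add_one_le_exp (-τ)
      linarith
    calc μ ((A j)ᶜ) ≤ 1 - ENNReal.ofReal τ := h2
      _ = ENNReal.ofReal (1 - τ) := h3
      _ ≤ ENNReal.ofReal (Real.exp (-τ)) := ENNReal.ofReal_le_ofReal h4
  have hcompl : μ (⋂ j ∈ Finset.Icc 1 t, (A j)ᶜ) ≤
      ENNReal.ofReal (Real.exp (-(τ * t))) := by
    calc μ (⋂ j ∈ Finset.Icc 1 t, (A j)ᶜ)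
        = ∏ j ∈ Finset.Icc 1 t, μ ((A j)ᶜ) := hprod
      _ ≤ ∏ _j ∈ Finset.Icc 1 t, ENNReal.ofReal (Real.exp (-τ)) :=
          Finset.prod_le_prod' fun j _ => hfac j
      _ = ENNReal.ofReal (Real.exp (-τ)) ^ t := by
          rw [Finset.prod_const, Nat.card_Icc]
          norm_num
      _ = ENNReal.ofReal (Real.exp (-τ) ^ t) :=
          (ENNReal.ofReal_pow (Real.exp_nonneg _) t).symm
      _ = ENNReal.ofReal (Real.exp (-(τ * t))) := by
          rw [← Real.exp_nat_mul]
          ring_nf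
  -- identify τ * t with the exponent
  have hCpos : 0 < C := by
    have hu : (0:ℝ) < (t : ℝ) ^ (1 / (α - 1)) :=
      Real.rpow_pos_of_pos (by exact_mod_cast ht0) _
    nlinarith
  have hτt : τ * t = β * (32 * C) ^ (1 - α) / (α - 1) := by
    have htR : (0:ℝ) < (t:ℝ) := by exact_mod_cast ht0
    have h2M : 2 * M = 32 * C * (t : ℝ) ^ (1 / (α - 1)) := by
      rw [hMdef]; ring
    have hsplit : (2 * M) ^ (1 - α) = (32 * C) ^ (1 - α) * ((t:ℝ))⁻¹ := by
      rw [h2M, Real.mul_rpow (by positivity) (Real.rpow_nonneg htR.le _)]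
      congr 1
      rw [← Real.rpow_mul htR.le]
      have hne : α - 1 ≠ 0 := by linarith
      rw [show (1 / (α - 1)) * (1 - α) = -1 by field_simp; ring]
      exact Real.rpow_neg_one (t:ℝ)
    rw [hτdef, hsplit]
    have hcalc : β * ((32 * C) ^ (1 - α) * (↑t)⁻¹) / (α - 1) * ↑t =
        β * (32 * C) ^ (1 - α) / (α - 1) * ((↑t)⁻¹ * ↑t) := by ring
    rw [hcalc, inv_mul_cancel₀ htR.ne', mul_one]
  -- assemble
  set S : Set Ω := {ω | ∃ j ∈ Finset.Icc 1 t, M ≤ (X j ω : ℝ)} with hSdef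
  have hSeq : S = ⋃ j ∈ Finset.Icc 1 t, A j := by
    ext ω
    simp [hSdef, hAdef, Set.mem_iUnion]
  have hSmeas : MeasurableSet S := by
    rw [hSeq]; exact MeasurableSet.biUnion (Finset.countable_toSet _) fun j _ => hAmeas j
  have hScompl : Sᶜ = ⋂ j ∈ Finset.Icc 1 t, (A j)ᶜ := by
    rw [hSeq, Set.compl_iUnion₂]
  have hμS : μ S = 1 - μ Sᶜ := by
    have h := prob_compl_eq_one_sub (μ := μ) hSmeas.compl
    rwa [compl_compl] at h
  have hμScompl : μ Sᶜ ≤ ENNReal.ofReal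
      (Real.exp (-(β * (32 * C) ^ (1 - α) / (α - 1)))) := by
    rw [hScompl, ← hτt]
    exact hcompl
  have htoReal : (μ S).toReal = 1 - (μ Sᶜ).toReal := by
    rw [hμS, ENNReal.toReal_sub_of_le prob_le_one ENNReal.one_ne_top, ENNReal.toReal_one]
  rw [htoReal]
  have : (μ Sᶜ).toReal ≤ Real.exp (-(β * (32 * C) ^ (1 - α) / (α - 1))) := by
    calc (μ Sᶜ).toReal ≤ (ENNReal.ofReal
        (Real.exp (-(β * (32 * C) ^ (1 - α) / (α - 1))))).toReal :=
          ENNReal.toReal_mono ENNReal.ofReal_ne_top hμScompl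
      _ = _ := ENNReal.toReal_ofReal (Real.exp_nonneg _)
  linarith
end

section
/- For each t let Z₁, …, Z_t be i.i.d. copies of Z(t), let L(τ) = ∑_{i=1}^τ Z_i, and let 𝒞 = 𝒞(t) be the event that |L(τ) − E[L(τ)]| ≤ t·log^{2/3} t for every 1 ≤ τ ≤ t. Then P(𝒞) = 1 − o(log^{−2} t); that is, log² t · (1 − P(𝒞(t))) → 0 as t → ∞. -/
open MeasureTheory ProbabilityTheory Real Filter

noncomputable def beta2 : ℝ := 6 / Real.pi ^ 2

noncomputable def truncpt (t : ℕ) : ℝ := (t : ℝ) * Real.log (Real.log (t : ℝ)) + 1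

noncomputable def P2lt (x : ℝ) : ℝ :=
  ∑' i : ℕ, if ((i : ℝ) + 1) < x then beta2 / ((i : ℝ) + 1) ^ 2 else 0

noncomputable def betapp (t : ℕ) : ℝ := beta2 / P2lt (truncpt t)

lemma beta2_pos : 0 < beta2 := div_pos (by norm_num) (pow_pos Real.pi_pos 2)

lemma one_le_log_nat {t : ℕ} (ht : 3 ≤ t) : 1 < Real.log t := by
  rw [Real.lt_log_iff_exp_lt (by positivity)]
  calc Real.exp 1 < 2.7182818286 := Real.exp_one_lt_d9
    _ < 3 := by norm_num
    _ ≤ (t : ℝ) := by exact_mod_cast ht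

lemma loglog_pos {t : ℕ} (ht : 3 ≤ t) : 0 < Real.log (Real.log t) :=
  Real.log_pos (one_le_log_nat ht)

lemma truncpt_gt_one {t : ℕ} (ht : 3 ≤ t) : 1 < truncpt t := by
  have h1 : (0:ℝ) < t := by positivity
  have := loglog_pos ht
  unfold truncpt; nlinarith

lemma P2lt_summable (x : ℝ) :
    Summable (fun i : ℕ => if ((i : ℝ) + 1) < x then beta2 / ((i : ℝ) + 1) ^ 2 else 0) := by
  have hs : Summable (fun i : ℕ => beta2 / ((i : ℝ) + 1) ^ 2) := by
    have := (summable_nat_add_iff 1).mpr (Real.summable_one_div_nat_pow.mpr (by norm_num : 1 < 2))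
    simpa [div_eq_mul_inv, mul_comm] using this.mul_left beta2
  have hnn : ∀ i : ℕ, (0:ℝ) ≤ beta2 / ((i : ℝ) + 1) ^ 2 :=
    fun i => div_nonneg beta2_pos.le (by positivity)
  refine hs.of_nonneg_of_le (fun i => ?_) (fun i => ?_) <;> split
  · exact hnn i
  · exact le_rfl
  · exact le_rfl
  · exact hnn i

lemma beta2_le_P2lt {x : ℝ} (hx : 1 < x) : beta2 ≤ P2lt x := by
  have h0 : (if ((0 : ℕ) : ℝ) + 1 < x then beta2 / (((0:ℕ) : ℝ) + 1) ^ 2 else 0) = beta2 := by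
    simp [hx]
  calc beta2 = _ := h0.symm
    _ ≤ P2lt x := Summable.le_tsum (P2lt_summable x) 0 (fun i _ => by
        split
        · exact div_nonneg beta2_pos.le (by positivity)
        · exact le_rfl)

lemma betapp_nonneg {t : ℕ} (ht : 3 ≤ t) : 0 ≤ betapp t :=
  div_nonneg beta2_pos.le ((beta2_le_P2lt (truncpt_gt_one ht)).trans' beta2_pos.le)

lemma betapp_le_one {t : ℕ} (ht : 3 ≤ t) : betapp t ≤ 1 :=
  div_le_one_of_le₀ (beta2_le_P2lt (truncpt_gt_one ht))
    (beta2_pos.le.trans (beta2_le_P2lt (truncpt_gt_one ht)))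

section Moments

variable {Ω : Type*} [MeasurableSpace Ω] (μ : Measure Ω) [IsProbabilityMeasure μ]

/-- support membership -/
lemma supp_mem {W : Ω → ℕ} {T : ℝ} (hT : 1 < T)
    (hs : ∀ ω, 1 ≤ W ω ∧ (W ω : ℝ) < T) (ω : Ω) :
    W ω ∈ Finset.Icc 1 (⌈T⌉₊ - 1) := by
  have h1 := (hs ω).1
  have h2 := (hs ω).2
  have : W ω < ⌈T⌉₊ := by
    have := h2.trans_le (Nat.le_ceil T)
    exact_mod_cast this
  simp only [Finset.mem_Icc]
  omega

lemma mem_supp_lt {T : ℝ} (hT : 1 < T) {k : ℕ} (hk : k ∈ Finset.Icc 1 (⌈T⌉₊ - 1)) :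
    1 ≤ k ∧ (k : ℝ) < T := by
  simp only [Finset.mem_Icc] at hk
  refine ⟨hk.1, ?_⟩
  have hceil : (⌈T⌉₊ : ℝ) < T + 1 := Nat.ceil_lt_add_one (by linarith)
  have h1 : 1 ≤ ⌈T⌉₊ := Nat.one_le_ceil_iff.mpr (by linarith)
  have : (k : ℝ) ≤ (⌈T⌉₊ : ℝ) - 1 := by
    have : (k : ℝ) ≤ ((⌈T⌉₊ - 1 : ℕ) : ℝ) := by exact_mod_cast hk.2
    rwa [Nat.cast_sub h1, Nat.cast_one] at this
  linarith

lemma integral_fn_eq_sum {W : Ω → ℕ} (hW : Measurable W) {T : ℝ} (hT : 1 < T)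
    (hs : ∀ ω, 1 ≤ W ω ∧ (W ω : ℝ) < T) (g : ℕ → ℝ) :
    ∫ ω, g (W ω) ∂μ = ∑ k ∈ Finset.Icc 1 (⌈T⌉₊ - 1), g k * (μ {ω | W ω = k}).toReal := by
  have hpt : ∀ ω, g (W ω) = ∑ k ∈ Finset.Icc 1 (⌈T⌉₊ - 1),
      Set.indicator {ω' | W ω' = k} (fun _ => g k) ω := by
    intro ω
    rw [Finset.sum_congr rfl (fun k _ => ?_)]
    · rw [Finset.sum_ite_eq' (Finset.Icc 1 (⌈T⌉₊-1)) (W ω) (fun k => g k)]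
      simp [supp_mem hT hs ω]
    · rw [Set.indicator_apply]
      simp only [Set.mem_setOf_eq]
      by_cases h : W ω = k
      · simp [h]
      · simp [h, Ne.symm h]
  calc ∫ ω, g (W ω) ∂μ
      = ∫ ω, ∑ k ∈ Finset.Icc 1 (⌈T⌉₊ - 1),
          Set.indicator {ω' | W ω' = k} (fun _ => g k) ω ∂μ := by
        exact integral_congr_ae (ae_of_all _ hpt)
    _ = ∑ k ∈ Finset.Icc 1 (⌈T⌉₊ - 1), ∫ ω,
          Set.indicator {ω' | W ω' = k} (fun _ => g k) ω ∂μ := by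
        refine integral_finset_sum _ (fun k _ => ?_)
        exact (integrable_const (g k)).indicator (hW (measurableSet_singleton k))
    _ = ∑ k ∈ Finset.Icc 1 (⌈T⌉₊ - 1), g k * (μ {ω | W ω = k}).toReal := by
        refine Finset.sum_congr rfl (fun k _ => ?_)
        have : {ω' | W ω' = k} = W ⁻¹' {k} := rfl
        rw [this, integral_indicator_const (g k) (hW (measurableSet_singleton k))]
        simp [mul_comm, measureReal_def]

end Moments

section Moments2

variable {Ω : Type*} [MeasurableSpace Ω] (μ : Measure Ω) [IsProbabilityMeasure μ]
  {W : Ω → ℕ} (hW : Measurable W) {T : ℝ} (hT : 1 < T)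
  (hs : ∀ ω, 1 ≤ W ω ∧ (W ω : ℝ) < T)

include hW in
lemma measW : Measurable (fun ω => (W ω : ℝ)) := measurable_from_top.comp hW

lemma integrable_bounded {f : Ω → ℝ} (hf : Measurable f) {c : ℝ} (h : ∀ ω, |f ω| ≤ c) :
    Integrable f μ :=
  (integrable_const c).mono' hf.aestronglyMeasurable (ae_of_all _ h)

include hW hs in
lemma integrableW : Integrable (fun ω => (W ω : ℝ)) μ := by
  refine integrable_bounded μ (measW hW) (c := T) (fun ω => ?_)
  rw [abs_of_nonneg (by positivity)]
  exact (hs ω).2.le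

include hW hs in
lemma integrableW2 : Integrable (fun ω => (W ω : ℝ)^2) μ := by
  refine integrable_bounded μ ((measW hW).pow_const 2) (c := T^2) (fun ω => ?_)
  rw [abs_of_nonneg (by positivity)]
  have h2 := (hs ω).2.le
  have h0 : (0:ℝ) ≤ (W ω : ℝ) := by positivity
  nlinarith

include hW hs hT in
lemma EW_ge_one : 1 ≤ ∫ ω, (W ω : ℝ) ∂μ := by
  have : ∫ (_ : Ω), (1:ℝ) ∂μ ≤ ∫ ω, (W ω : ℝ) ∂μ := by
    refine integral_mono (integrable_const 1) (integrableW μ hW hs) (fun ω => ?_)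
    show (1:ℝ) ≤ (W ω : ℝ)
    exact_mod_cast (hs ω).1
  simpa using this

include hW hs hT in
lemma EW_le_T : ∫ ω, (W ω : ℝ) ∂μ ≤ T := by
  have : ∫ ω, (W ω : ℝ) ∂μ ≤ ∫ (_ : Ω), T ∂μ := by
    refine integral_mono (integrableW μ hW hs) (integrable_const T) (fun ω => (hs ω).2.le)
  simpa using this

variable {b : ℝ} (hb0 : 0 ≤ b) (hb1 : b ≤ 1)
  (hd : ∀ k : ℕ, 1 ≤ k → (k : ℝ) < T → (μ {ω | W ω = k}).toReal = b / (k:ℝ)^2)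

include hT in
lemma K_le_T : ((⌈T⌉₊ - 1 : ℕ) : ℝ) ≤ T := by
  have hceil : (⌈T⌉₊ : ℝ) < T + 1 := Nat.ceil_lt_add_one (by linarith)
  have h1 : 1 ≤ ⌈T⌉₊ := Nat.one_le_ceil_iff.mpr (by linarith)
  rw [Nat.cast_sub h1, Nat.cast_one]
  linarith

include hW hT hs hb0 hb1 hd in
lemma EW_le : ∫ ω, (W ω : ℝ) ∂μ ≤ 1 + Real.log T := by
  set K := ⌈T⌉₊ - 1 with hK
  have hK1 : 1 ≤ K := by
    have : 2 ≤ ⌈T⌉₊ := by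
      have : (1:ℕ) < ⌈T⌉₊ := Nat.lt_ceil.mpr (by push_cast; linarith)
      omega
    omega
  have hrep := integral_fn_eq_sum μ hW hT hs (fun k => (k : ℝ))
  rw [hrep]
  have hterm : ∀ k ∈ Finset.Icc 1 K, (k:ℝ) * (μ {ω | W ω = k}).toReal = b * ((k:ℝ))⁻¹ := by
    intro k hk
    obtain ⟨hk1, hkT⟩ := mem_supp_lt hT hk
    rw [hd k hk1 hkT]
    have : ((k:ℝ)) ≠ 0 := by positivity
    field_simp
  rw [Finset.sum_congr rfl hterm, ← Finset.mul_sum]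
  have hharm : ∑ k ∈ Finset.Icc 1 K, ((k:ℝ))⁻¹ = ((harmonic K : ℚ) : ℝ) := by
    rw [harmonic_eq_sum_Icc]
    push_cast
    rfl
  rw [hharm]
  have h1 : ((harmonic K : ℚ) : ℝ) ≤ 1 + Real.log K := harmonic_le_one_add_log K
  have h2 : Real.log (K:ℝ) ≤ Real.log T :=
    Real.log_le_log (by exact_mod_cast hK1) (K_le_T hT)
  have h3 : (0:ℝ) ≤ ((harmonic K : ℚ) : ℝ) := by
    have : (0:ℚ) < harmonic K := harmonic_pos (by omega)
    have : (0:ℚ) ≤ harmonic K := this.le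
    exact_mod_cast this
  nlinarith

include hW hT hs hb0 hb1 hd in
lemma EW2_le : ∫ ω, (W ω : ℝ)^2 ∂μ ≤ T := by
  set K := ⌈T⌉₊ - 1 with hK
  have hrep := integral_fn_eq_sum μ hW hT hs (fun k => ((k : ℝ))^2)
  rw [hrep]
  have hterm : ∀ k ∈ Finset.Icc 1 K, ((k:ℝ))^2 * (μ {ω | W ω = k}).toReal = b := by
    intro k hk
    obtain ⟨hk1, hkT⟩ := mem_supp_lt hT hk
    rw [hd k hk1 hkT]
    have : ((k:ℝ)) ≠ 0 := by positivity
    field_simp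
  rw [Finset.sum_congr rfl hterm, Finset.sum_const, Nat.card_Icc]
  have hcard : ((K + 1 - 1 : ℕ) : ℝ) ≤ T := by
    simpa using K_le_T hT
  have : ((K + 1 - 1 : ℕ) : ℝ) • b ≤ ((K + 1 - 1 : ℕ) : ℝ) * 1 := by
    rw [smul_eq_mul]
    exact mul_le_mul_of_nonneg_left hb1 (by positivity)
  calc ((K + 1 - 1 : ℕ)) • b = ((K + 1 - 1 : ℕ) : ℝ) • b := by rw [nsmul_eq_mul]; rfl
    _ ≤ ((K + 1 - 1 : ℕ) : ℝ) * 1 := this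
    _ ≤ T := by rw [mul_one]; exact hcard

end Moments2

lemma exp_le_quadratic {x : ℝ} (hx : |x| ≤ 1) : Real.exp x ≤ 1 + x + x^2 := by
  have h := Real.exp_bound hx (n := 2) (by norm_num)
  have hsum : ∑ i ∈ Finset.range 2, x^i / (Nat.factorial i) = 1 + x := by
    simp [Finset.sum_range_succ]
  rw [hsum] at h
  have h2 : Real.exp x - (1 + x) ≤ |x|^2 * ((2:ℕ).succ / ((Nat.factorial 2) * 2)) :=
    (le_abs_self _).trans h
  have : |x|^2 = x^2 := sq_abs x
  rw [this] at h2
  norm_num at h2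
  nlinarith [sq_nonneg x]

section MGF

variable {Ω : Type*} [MeasurableSpace Ω] (μ : Measure Ω) [IsProbabilityMeasure μ]
  {W : Ω → ℕ} (hW : Measurable W) {T : ℝ} (hT : 1 < T)
  (hs : ∀ ω, 1 ≤ W ω ∧ (W ω : ℝ) < T)

include hW hs in
lemma integrable_exp_W (s : ℝ) : Integrable (fun ω => Real.exp (s * (W ω : ℝ))) μ := by
  refine integrable_bounded μ (((measW hW).const_mul s).exp) (c := Real.exp (|s| * T))
    (fun ω => ?_)
  rw [abs_of_nonneg (Real.exp_pos _).le, Real.exp_le_exp]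
  have h0 : (0:ℝ) ≤ (W ω : ℝ) := by positivity
  have h2 := (hs ω).2.le
  calc s * (W ω : ℝ) ≤ |s| * (W ω : ℝ) := by
        exact mul_le_mul_of_nonneg_right (le_abs_self s) h0
    _ ≤ |s| * T := mul_le_mul_of_nonneg_left h2 (abs_nonneg s)

include hW hT hs in
lemma integrable_Wsub (m : ℝ) : Integrable (fun ω => (W ω : ℝ) - m) μ :=
  (integrableW μ hW hs).sub (integrable_const m)

include hW hT hs in
lemma integrable_Wsub_sq (m : ℝ) : Integrable (fun ω => ((W ω : ℝ) - m)^2) μ := by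
  have : (fun ω => ((W ω : ℝ) - m)^2)
      = fun ω => (W ω : ℝ)^2 - (2*m) * (W ω : ℝ) + m^2 := by
    funext ω; ring
  rw [this]
  exact (((integrableW2 μ hW hs)).sub ((integrableW μ hW hs).const_mul (2*m))).add
    (integrable_const _)

variable {b : ℝ} (hb0 : 0 ≤ b) (hb1 : b ≤ 1)
  (hd : ∀ k : ℕ, 1 ≤ k → (k : ℝ) < T → (μ {ω | W ω = k}).toReal = b / (k:ℝ)^2)

include hW hT hs hb0 hb1 hd in
lemma var_le : ∫ ω, ((W ω : ℝ) - ∫ ω', (W ω' : ℝ) ∂μ)^2 ∂μ ≤ T := by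
  set m := ∫ ω', (W ω' : ℝ) ∂μ with hm
  have hexp : (fun ω => ((W ω : ℝ) - m)^2)
      = fun ω => (W ω : ℝ)^2 - (2*m) * (W ω : ℝ) + m^2 := by
    funext ω; ring
  rw [hexp]
  have hsub : Integrable (fun ω => (W ω : ℝ)^2 - 2*m * (W ω : ℝ)) μ :=
    (integrableW2 μ hW hs).sub ((integrableW μ hW hs).const_mul (2*m))
  rw [integral_add hsub (integrable_const _),
    integral_sub (integrableW2 μ hW hs) ((integrableW μ hW hs).const_mul (2*m)),
    integral_const_mul, integral_const]
  simp only [probReal_univ, smul_eq_mul, one_mul]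
  have hEW2 := EW2_le μ hW hT hs hb0 hb1 hd
  have hm1 : 1 ≤ m := EW_ge_one μ hW hT hs
  have h2 : ∫ (a : Ω), (W a : ℝ) ∂μ = m := hm.symm
  rw [h2]
  nlinarith

include hW hT hs hb0 hb1 hd in
lemma mgf_bound (s : ℝ) (hsT : |s| * T ≤ 1) :
    mgf (fun ω => (W ω : ℝ)) μ s
      ≤ Real.exp (s * (∫ ω, (W ω : ℝ) ∂μ) + s^2 * T) := by
  set m := ∫ ω, (W ω : ℝ) ∂μ with hm
  have hm1 : 1 ≤ m := EW_ge_one μ hW hT hs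
  have hmT : m ≤ T := EW_le_T μ hW hT hs
  have habs : ∀ ω, |(W ω : ℝ) - m| ≤ T := by
    intro ω
    have h1 : (1:ℝ) ≤ (W ω : ℝ) := by exact_mod_cast (hs ω).1
    have h2 := (hs ω).2.le
    rw [abs_le]; constructor <;> nlinarith
  have hpt : ∀ ω, Real.exp (s * (W ω : ℝ)) ≤
      Real.exp (s * m) * (1 + s * ((W ω : ℝ) - m) + s^2 * ((W ω : ℝ) - m)^2) := by
    intro ω
    have : s * (W ω : ℝ) = s * m + s * ((W ω : ℝ) - m) := by ring
    rw [this, Real.exp_add]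
    refine mul_le_mul_of_nonneg_left ?_ (Real.exp_pos _).le
    have hxabs : |s * ((W ω : ℝ) - m)| ≤ 1 := by
      rw [abs_mul]
      calc |s| * |(W ω : ℝ) - m| ≤ |s| * T :=
            mul_le_mul_of_nonneg_left (habs ω) (abs_nonneg s)
        _ ≤ 1 := hsT
    have := exp_le_quadratic hxabs
    calc Real.exp (s * ((W ω : ℝ) - m)) ≤ 1 + s * ((W ω : ℝ) - m) + (s * ((W ω : ℝ) - m))^2 :=
          this
      _ = 1 + s * ((W ω : ℝ) - m) + s^2 * ((W ω : ℝ) - m)^2 := by ring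
  have hint : Integrable (fun ω => Real.exp (s * m) *
      (1 + s * ((W ω : ℝ) - m) + s^2 * ((W ω : ℝ) - m)^2)) μ := by
    refine Integrable.const_mul ?_ _
    exact ((integrable_const 1).add ((integrable_Wsub μ hW hT hs m).const_mul s)).add
      ((integrable_Wsub_sq μ hW hT hs m).const_mul (s^2))
  have hmono : mgf (fun ω => (W ω : ℝ)) μ s ≤ ∫ ω, Real.exp (s * m) *
      (1 + s * ((W ω : ℝ) - m) + s^2 * ((W ω : ℝ) - m)^2) ∂μ := by
    exact integral_mono (integrable_exp_W μ hW hs s) hint hpt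
  have hzero : ∫ ω, ((W ω : ℝ) - m) ∂μ = 0 := by
    rw [integral_sub (integrableW μ hW hs) (integrable_const m), integral_const]
    simp [hm]
  have hval : ∫ ω, Real.exp (s * m) *
      (1 + s * ((W ω : ℝ) - m) + s^2 * ((W ω : ℝ) - m)^2) ∂μ
      = Real.exp (s * m) * (1 + s^2 * (∫ ω, ((W ω : ℝ) - m)^2 ∂μ)) := by
    rw [integral_const_mul]
    have h1 : Integrable (fun ω => 1 + s * ((W ω : ℝ) - m)) μ :=
      (integrable_const 1).add ((integrable_Wsub μ hW hT hs m).const_mul s)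
    rw [integral_add h1 ((integrable_Wsub_sq μ hW hT hs m).const_mul (s^2)),
      integral_add (integrable_const 1) ((integrable_Wsub μ hW hT hs m).const_mul s),
      integral_const_mul, integral_const_mul, hzero, integral_const]
    simp
  rw [hval] at hmono
  have hvar := var_le μ hW hT hs hb0 hb1 hd
  calc mgf (fun ω => (W ω : ℝ)) μ s
      ≤ Real.exp (s * m) * (1 + s^2 * (∫ ω, ((W ω : ℝ) - m)^2 ∂μ)) := hmono
    _ ≤ Real.exp (s * m) * (1 + s^2 * T) := by
        refine mul_le_mul_of_nonneg_left ?_ (Real.exp_pos _).le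
        nlinarith [sq_nonneg s]
    _ ≤ Real.exp (s * m) * Real.exp (s^2 * T) := by
        refine mul_le_mul_of_nonneg_left ?_ (Real.exp_pos _).le
        have := Real.add_one_le_exp (s^2 * T)
        linarith
    _ = Real.exp (s * m + s^2 * T) := (Real.exp_add _ _).symm

end MGF

section Tail

variable {Ω : Type*} [MeasurableSpace Ω] (μ : Measure Ω) [IsProbabilityMeasure μ]
  {V : ℕ → Ω → ℕ} (hmeas : ∀ i, Measurable (V i))
  {T : ℝ} (hT : 1 < T)
  (hs : ∀ i ω, 1 ≤ V i ω ∧ (V i ω : ℝ) < T)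
  {b : ℝ} (hb0 : 0 ≤ b) (hb1 : b ≤ 1)
  (hd : ∀ (i0 : ℕ) (k : ℕ), 1 ≤ k → (k:ℝ) < T → (μ {ω | V i0 ω = k}).toReal = b / (k:ℝ)^2)
  (hind : iIndepFun V μ)

include hmeas hT hs in
lemma integrable_exp_sum (s : ℝ) (τ : ℕ) :
    Integrable (fun ω => Real.exp (s * ∑ i ∈ Finset.Icc 1 τ, (V i ω : ℝ))) μ := by
  have hmS : Measurable (fun ω => ∑ i ∈ Finset.Icc 1 τ, (V i ω : ℝ)) :=
    Finset.measurable_sum _ (fun i _ => measW (hmeas i))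
  refine integrable_bounded μ ((hmS.const_mul s).exp) (c := Real.exp (|s| * (τ * T)))
    (fun ω => ?_)
  rw [abs_of_nonneg (Real.exp_pos _).le, Real.exp_le_exp]
  have hb : ∑ i ∈ Finset.Icc 1 τ, (V i ω : ℝ) ≤ τ * T := by
    calc ∑ i ∈ Finset.Icc 1 τ, (V i ω : ℝ) ≤ ∑ i ∈ Finset.Icc 1 τ, T :=
          Finset.sum_le_sum (fun i _ => (hs i ω).2.le)
      _ = (Finset.Icc 1 τ).card * T := by rw [Finset.sum_const, nsmul_eq_mul]
      _ ≤ τ * T := by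
          rw [Nat.card_Icc]
          gcongr <;> simp
  have hnn : (0:ℝ) ≤ ∑ i ∈ Finset.Icc 1 τ, (V i ω : ℝ) :=
    Finset.sum_nonneg (fun i _ => by positivity)
  calc s * ∑ i ∈ Finset.Icc 1 τ, (V i ω : ℝ) ≤ |s| * ∑ i ∈ Finset.Icc 1 τ, (V i ω : ℝ) :=
        mul_le_mul_of_nonneg_right (le_abs_self s) hnn
    _ ≤ |s| * (τ * T) := mul_le_mul_of_nonneg_left hb (abs_nonneg s)

include hmeas hT hs hb0 hb1 hd hind in
lemma mgf_sum_bound (s : ℝ) (hsT : |s| * T ≤ 1) (τ : ℕ) :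
    mgf (fun ω => ∑ i ∈ Finset.Icc 1 τ, (V i ω : ℝ)) μ s
      ≤ Real.exp (s * (∫ ω, ∑ i ∈ Finset.Icc 1 τ, (V i ω : ℝ) ∂μ) + τ * (s^2 * T)) := by
  have hindR : iIndepFun
      (fun i (ω : Ω) => (V i ω : ℝ)) μ := by
    exact hind.comp (fun i (n : ℕ) => (n : ℝ)) (fun i => measurable_from_top)
  have hfun : (fun ω => ∑ i ∈ Finset.Icc 1 τ, (V i ω : ℝ))
      = ∑ i ∈ Finset.Icc 1 τ, (fun ω => (V i ω : ℝ)) := by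
    funext ω; rw [Finset.sum_apply]
  have hmgf : mgf (fun ω => ∑ i ∈ Finset.Icc 1 τ, (V i ω : ℝ)) μ s
      = ∏ i ∈ Finset.Icc 1 τ, mgf (fun ω => (V i ω : ℝ)) μ s := by
    rw [hfun]
    exact hindR.mgf_sum (fun i => measW (hmeas i)) _
  have hInt : ∫ ω, ∑ i ∈ Finset.Icc 1 τ, (V i ω : ℝ) ∂μ
      = ∑ i ∈ Finset.Icc 1 τ, ∫ ω, (V i ω : ℝ) ∂μ :=
    integral_finset_sum _ (fun i _ => integrableW μ (hmeas i) (hs i))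
  rw [hmgf, hInt]
  calc ∏ i ∈ Finset.Icc 1 τ, mgf (fun ω => (V i ω : ℝ)) μ s
      ≤ ∏ i ∈ Finset.Icc 1 τ, Real.exp (s * (∫ ω, (V i ω : ℝ) ∂μ) + s^2 * T) := by
        refine Finset.prod_le_prod (fun i _ => mgf_nonneg) (fun i _ => ?_)
        exact mgf_bound μ (hmeas i) hT (hs i) hb0 hb1 (hd i) s hsT
    _ = Real.exp (∑ i ∈ Finset.Icc 1 τ, (s * (∫ ω, (V i ω : ℝ) ∂μ) + s^2 * T)) := by
        rw [← Real.exp_sum]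
    _ ≤ Real.exp (s * (∑ i ∈ Finset.Icc 1 τ, ∫ ω, (V i ω : ℝ) ∂μ) + τ * (s^2 * T)) := by
        have hcard : (τ + 1 - 1 : ℕ) = τ := by omega
        rw [Real.exp_le_exp, Finset.sum_add_distrib, Finset.mul_sum, Finset.sum_const,
          nsmul_eq_mul, Nat.card_Icc, hcard]

include hmeas hT hs hb0 hb1 hd hind in
lemma tail_up (t τ : ℕ) (hτ : τ ≤ t) (a : ℝ) :
    (μ {ω | a ≤ (∑ i ∈ Finset.Icc 1 τ, (V i ω : ℝ))
        - ∫ ω', ∑ i ∈ Finset.Icc 1 τ, (V i ω' : ℝ) ∂μ}).toReal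
      ≤ Real.exp (-(a/T) + t/T) := by
  have hT0 : (0:ℝ) < T := by linarith
  set M := ∫ ω', ∑ i ∈ Finset.Icc 1 τ, (V i ω' : ℝ) ∂μ with hM
  have hset : {ω | a ≤ (∑ i ∈ Finset.Icc 1 τ, (V i ω : ℝ)) - M}
      = {ω | M + a ≤ ∑ i ∈ Finset.Icc 1 τ, (V i ω : ℝ)} := by
    ext ω; simp only [Set.mem_setOf_eq]; constructor <;> intro h <;> linarith
  rw [hset]
  have hs1 : |1/T| * T ≤ 1 := by
    rw [abs_of_nonneg (by positivity)]
    field_simp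
    exact le_rfl
  have h1 := measure_ge_le_exp_mul_mgf (μ := μ)
    (X := fun ω => ∑ i ∈ Finset.Icc 1 τ, (V i ω : ℝ)) (t := 1/T) (M + a)
    (by positivity) (integrable_exp_sum μ hmeas hT hs (1/T) τ)
  refine h1.trans ?_
  have h2 := mgf_sum_bound μ hmeas hT hs hb0 hb1 hd hind (1/T) hs1 τ
  calc Real.exp (-(1/T) * (M + a)) * mgf (fun ω => ∑ i ∈ Finset.Icc 1 τ, (V i ω : ℝ)) μ (1/T)
      ≤ Real.exp (-(1/T) * (M + a)) * Real.exp ((1/T) * M + τ * ((1/T)^2 * T)) := by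
        exact mul_le_mul_of_nonneg_left h2 (Real.exp_pos _).le
    _ = Real.exp (-(a/T) + τ/T) := by
        rw [← Real.exp_add]
        congr 1
        field_simp
        ring
    _ ≤ Real.exp (-(a/T) + t/T) := by
        rw [Real.exp_le_exp]
        have h : (τ:ℝ) ≤ (t:ℝ) := by exact_mod_cast hτ
        have h2 : (τ:ℝ)/T ≤ (t:ℝ)/T := (div_le_div_iff_of_pos_right hT0).mpr h
        linarith

include hmeas hT hs hb0 hb1 hd hind in
lemma tail_down (t τ : ℕ) (hτ : τ ≤ t) (a : ℝ) :
    (μ {ω | (∑ i ∈ Finset.Icc 1 τ, (V i ω : ℝ))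
        - ∫ ω', ∑ i ∈ Finset.Icc 1 τ, (V i ω' : ℝ) ∂μ ≤ -a}).toReal
      ≤ Real.exp (-(a/T) + t/T) := by
  have hT0 : (0:ℝ) < T := by linarith
  set M := ∫ ω', ∑ i ∈ Finset.Icc 1 τ, (V i ω' : ℝ) ∂μ with hM
  have hset : {ω | (∑ i ∈ Finset.Icc 1 τ, (V i ω : ℝ)) - M ≤ -a}
      = {ω | ∑ i ∈ Finset.Icc 1 τ, (V i ω : ℝ) ≤ M - a} := by
    ext ω; simp only [Set.mem_setOf_eq]; constructor <;> intro h <;> linarith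
  rw [hset]
  have hs1 : |-(1/T)| * T ≤ 1 := by
    rw [abs_neg, abs_of_nonneg (by positivity)]
    field_simp
    exact le_rfl
  have h1 := measure_le_le_exp_mul_mgf (μ := μ)
    (X := fun ω => ∑ i ∈ Finset.Icc 1 τ, (V i ω : ℝ)) (t := -(1/T)) (M - a)
    (by simp; positivity) (integrable_exp_sum μ hmeas hT hs (-(1/T)) τ)
  refine h1.trans ?_
  have h2 := mgf_sum_bound μ hmeas hT hs hb0 hb1 hd hind (-(1/T)) hs1 τ
  calc Real.exp (-(-(1/T)) * (M - a)) * mgf (fun ω => ∑ i ∈ Finset.Icc 1 τ, (V i ω : ℝ)) μ (-(1/T))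
      ≤ Real.exp (-(-(1/T)) * (M - a)) * Real.exp ((-(1/T)) * M + τ * ((-(1/T))^2 * T)) := by
        exact mul_le_mul_of_nonneg_left h2 (Real.exp_pos _).le
    _ = Real.exp (-(a/T) + τ/T) := by
        rw [← Real.exp_add]
        congr 1
        field_simp
        ring
    _ ≤ Real.exp (-(a/T) + t/T) := by
        rw [Real.exp_le_exp]
        have h : (τ:ℝ) ≤ (t:ℝ) := by exact_mod_cast hτ
        have h2 : (τ:ℝ)/T ≤ (t:ℝ)/T := (div_le_div_iff_of_pos_right hT0).mpr h
        linarith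

end Tail

lemma interp (S M : ℕ → ℝ) (a mbar : ℝ)
    (hSmono : ∀ τ τ', τ ≤ τ' → S τ ≤ S τ')
    (hMmono : ∀ τ τ', τ ≤ τ' → M τ ≤ M τ')
    (hMstep : ∀ τ τ', τ ≤ τ' → M τ' - M τ ≤ ((τ' - τ : ℕ) : ℝ) * mbar)
    (Δ K t : ℕ) (hΔ0 : 0 < Δ) (hKΔ : t ≤ K * Δ) (hΔm : (Δ:ℝ) * mbar ≤ a)
    (hmbar0 : 0 ≤ mbar)
    (H : ∀ k, k ≤ K + 1 → |S (min (k*Δ) t) - M (min (k*Δ) t)| ≤ a)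
    (τ : ℕ) (hτ : τ ≤ t) : |S τ - M τ| ≤ 2*a := by
  set k := τ / Δ with hk
  have hdm := Nat.div_add_mod τ Δ
  have hmod := Nat.mod_lt τ hΔ0
  have hcomm : k * Δ = Δ * (τ / Δ) := by rw [hk, Nat.mul_comm]
  have hlok : k * Δ ≤ τ := by omega
  have hhik : τ < (k+1) * Δ := by
    have : (k+1) * Δ = k * Δ + Δ := by ring
    omega
  have hkK : k ≤ K := by
    by_contra hcon
    push_neg at hcon
    have h1 : (K+1) * Δ ≤ k * Δ := Nat.mul_le_mul_right Δ hcon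
    have h2 : (K+1) * Δ = K * Δ + Δ := by ring
    omega
  set lo := k * Δ with hlo
  set hi := min ((k+1) * Δ) t with hhi
  have hminlo : min (k*Δ) t = lo := min_eq_left (le_trans hlok hτ)
  have Hlo := H k (by omega)
  rw [hminlo] at Hlo
  have Hhi := H (k+1) (by omega)
  rw [← hhi] at Hhi
  have hτhi : τ ≤ hi := le_min (by omega) hτ
  have hhile : hi ≤ lo + Δ := by
    have h1 : hi ≤ (k+1)*Δ := min_le_left _ _
    have h2 : (k+1) * Δ = k * Δ + Δ := by ring
    omega
  have hlohi : lo ≤ hi := le_trans hlok hτhi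
  have hstep : M hi - M lo ≤ a := by
    calc M hi - M lo ≤ ((hi - lo : ℕ) : ℝ) * mbar := hMstep lo hi hlohi
      _ ≤ (Δ:ℝ) * mbar := by
          refine mul_le_mul_of_nonneg_right ?_ hmbar0
          exact_mod_cast by omega
      _ ≤ a := hΔm
  have hup := (abs_le.mp Hhi).2
  have hdn := (abs_le.mp Hlo).1
  have hS1 := hSmono τ hi hτhi
  have hS2 := hSmono lo τ hlok
  have hM1 := hMmono lo τ hlok
  have hM2 := hMmono τ hi hτhi
  rw [abs_le]
  constructor <;> nlinarith [hMstep lo hi hlohi]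

section Union

variable {Ω : Type*} [MeasurableSpace Ω] (μ : Measure Ω) [IsProbabilityMeasure μ]
  {V : ℕ → Ω → ℕ} (hmeas : ∀ i, Measurable (V i))
  {T : ℝ} (hT : 1 < T)
  (hs : ∀ i ω, 1 ≤ V i ω ∧ (V i ω : ℝ) < T)
  {b : ℝ} (hb0 : 0 ≤ b) (hb1 : b ≤ 1)
  (hd : ∀ (i0 : ℕ) (k : ℕ), 1 ≤ k → (k:ℝ) < T → (μ {ω | V i0 ω = k}).toReal = b / (k:ℝ)^2)
  (hind : iIndepFun V μ)

include hmeas hT hs in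
lemma Mpart_mono_step (mbar : ℝ) (hmbar : ∀ i, ∫ ω, (V i ω : ℝ) ∂μ ≤ mbar)
    (τ τ' : ℕ) (hττ' : τ ≤ τ') :
    (0 ≤ (∫ ω', ∑ i ∈ Finset.Icc 1 τ', (V i ω' : ℝ) ∂μ)
        - ∫ ω', ∑ i ∈ Finset.Icc 1 τ, (V i ω' : ℝ) ∂μ) ∧
    (∫ ω', ∑ i ∈ Finset.Icc 1 τ', (V i ω' : ℝ) ∂μ)
        - (∫ ω', ∑ i ∈ Finset.Icc 1 τ, (V i ω' : ℝ) ∂μ)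
      ≤ ((τ' - τ : ℕ) : ℝ) * mbar := by
  have hrep : ∀ σ : ℕ, ∫ ω', ∑ i ∈ Finset.Icc 1 σ, (V i ω' : ℝ) ∂μ
      = ∑ i ∈ Finset.Ioc 0 σ, ∫ ω', (V i ω' : ℝ) ∂μ := by
    intro σ
    rw [integral_finset_sum _ (fun i _ => integrableW μ (hmeas i) (hs i))]
    congr 1
  have hsplit : ∑ i ∈ Finset.Ioc 0 τ, (∫ ω', (V i ω' : ℝ) ∂μ)
      + ∑ i ∈ Finset.Ioc τ τ', (∫ ω', (V i ω' : ℝ) ∂μ)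
      = ∑ i ∈ Finset.Ioc 0 τ', (∫ ω', (V i ω' : ℝ) ∂μ) :=
    Finset.sum_Ioc_consecutive _ (Nat.zero_le τ) hττ'
  rw [hrep, hrep, ← hsplit]
  have hnn : ∀ i, (0:ℝ) ≤ ∫ ω', (V i ω' : ℝ) ∂μ :=
    fun i => integral_nonneg (fun ω => by positivity)
  constructor
  · have : (0:ℝ) ≤ ∑ i ∈ Finset.Ioc τ τ', ∫ ω', (V i ω' : ℝ) ∂μ :=
      Finset.sum_nonneg (fun i _ => hnn i)
    linarith
  · have h1 : ∑ i ∈ Finset.Ioc τ τ', (∫ ω', (V i ω' : ℝ) ∂μ)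
        ≤ (Finset.Ioc τ τ').card • mbar :=
      Finset.sum_le_card_nsmul _ _ _ (fun i _ => hmbar i)
    rw [Nat.card_Ioc, nsmul_eq_mul] at h1
    linarith

include hmeas hT hs hb0 hb1 hd hind in
lemma compl_bound (t Δ K : ℕ) (hΔ0 : 0 < Δ) (hKΔ : t ≤ K * Δ)
    (mbar a : ℝ) (ha : 0 ≤ a) (hmbar0 : 0 ≤ mbar)
    (hmbar : ∀ i, ∫ ω, (V i ω : ℝ) ∂μ ≤ mbar) (hΔm : (Δ:ℝ) * mbar ≤ a) :
    (μ {ω | ¬ ∀ τ ∈ Finset.Icc 1 t,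
        |(∑ i ∈ Finset.Icc 1 τ, (V i ω : ℝ))
          - ∫ ω', ∑ i ∈ Finset.Icc 1 τ, (V i ω' : ℝ) ∂μ| ≤ 2*a}).toReal
      ≤ ((K:ℝ) + 2) * (2 * Real.exp (-(a/T) + t/T)) := by
  set Sf : ℕ → Ω → ℝ := fun τ ω => ∑ i ∈ Finset.Icc 1 τ, (V i ω : ℝ) with hSf
  set Mf : ℕ → ℝ := fun τ => ∫ ω', Sf τ ω' ∂μ with hMf
  set g : ℕ → Set Ω := fun k =>
    {ω | a ≤ Sf (min (k*Δ) t) ω - Mf (min (k*Δ) t)}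
      ∪ {ω | Sf (min (k*Δ) t) ω - Mf (min (k*Δ) t) ≤ -a} with hg
  have hsub : {ω | ¬ ∀ τ ∈ Finset.Icc 1 t, |Sf τ ω - Mf τ| ≤ 2*a}
      ⊆ ⋃ k ∈ Finset.range (K+2), g k := by
    intro ω hω
    simp only [Set.mem_setOf_eq] at hω
    by_contra hnotin
    apply hω
    intro τ hτmem
    have H : ∀ k, k ≤ K + 1 → |Sf (min (k*Δ) t) ω - Mf (min (k*Δ) t)| ≤ a := by
      intro k hk
      have hmem : ω ∉ g k := fun hm =>
        hnotin (Set.mem_biUnion (Finset.mem_range.mpr (by omega)) hm)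
      rw [hg] at hmem
      simp only [Set.mem_union, Set.mem_setOf_eq, not_or, not_le] at hmem
      exact abs_le.mpr ⟨hmem.2.le, hmem.1.le⟩
    refine interp (fun τ => Sf τ ω) Mf a mbar ?_ ?_ ?_ Δ K t hΔ0 hKΔ hΔm hmbar0 H τ
      (Finset.mem_Icc.mp hτmem).2
    · intro σ σ' hσ
      refine Finset.sum_le_sum_of_subset_of_nonneg
        (Finset.Icc_subset_Icc_right hσ) (fun i _ _ => by positivity)
    · intro σ σ' hσ
      have := (Mpart_mono_step μ hmeas hT hs mbar hmbar σ σ' hσ).1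
      simpa [hMf, hSf] using by linarith [this]
    · intro σ σ' hσ
      exact (Mpart_mono_step μ hmeas hT hs mbar hmbar σ σ' hσ).2
  have hperk : ∀ k, (μ (g k)).toReal ≤ 2 * Real.exp (-(a/T) + t/T) := by
    intro k
    have hτle : min (k*Δ) t ≤ t := min_le_right _ _
    have h1 := tail_up μ hmeas hT hs hb0 hb1 hd hind t (min (k*Δ) t) hτle a
    have h2 := tail_down μ hmeas hT hs hb0 hb1 hd hind t (min (k*Δ) t) hτle a
    have hle : μ (g k) ≤ μ {ω | a ≤ Sf (min (k*Δ) t) ω - Mf (min (k*Δ) t)}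
        + μ {ω | Sf (min (k*Δ) t) ω - Mf (min (k*Δ) t) ≤ -a} := measure_union_le _ _
    have := ENNReal.toReal_mono (by finiteness) hle
    rw [ENNReal.toReal_add (by finiteness) (by finiteness)] at this
    calc (μ (g k)).toReal ≤ _ := this
      _ ≤ Real.exp (-(a/T) + t/T) + Real.exp (-(a/T) + t/T) := add_le_add h1 h2
      _ = 2 * Real.exp (-(a/T) + t/T) := by ring
  calc (μ {ω | ¬ ∀ τ ∈ Finset.Icc 1 t, |Sf τ ω - Mf τ| ≤ 2*a}).toReal
      ≤ (μ (⋃ k ∈ Finset.range (K+2), g k)).toReal :=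
        ENNReal.toReal_mono (measure_ne_top μ _) (measure_mono hsub)
    _ ≤ (∑ k ∈ Finset.range (K+2), μ (g k)).toReal :=
        ENNReal.toReal_mono (ENNReal.sum_lt_top.mpr (fun k _ => measure_lt_top μ _)).ne
          (measure_biUnion_finset_le _ _)
    _ = ∑ k ∈ Finset.range (K+2), (μ (g k)).toReal :=
        ENNReal.toReal_sum (fun k _ => by finiteness)
    _ ≤ ∑ k ∈ Finset.range (K+2), 2 * Real.exp (-(a/T) + t/T) :=
        Finset.sum_le_sum (fun k _ => hperk k)
    _ = ((K:ℝ) + 2) * (2 * Real.exp (-(a/T) + t/T)) := by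
        rw [Finset.sum_const, Finset.card_range, nsmul_eq_mul]
        push_cast
        ring

end Union

noncomputable def Fbd (x : ℝ) : ℝ :=
  70 * x ^ ((7:ℝ)/3) * Real.exp ((1 - x ^ ((2:ℝ)/3) / 2) / (2 * Real.log x))

lemma tendsto_Fbd : Tendsto Fbd atTop (nhds 0) := by
  have hlog2 : (fun x : ℝ => Real.log x * Real.log x) =o[atTop]
      (fun x : ℝ => x ^ ((2:ℝ)/3)) := by
    have h1 := isLittleO_log_rpow_atTop (by norm_num : (0:ℝ) < 1/3)
    have h2 := h1.mul h1
    refine h2.trans_eventuallyEq ?_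
    filter_upwards [eventually_gt_atTop (0:ℝ)] with x hx
    rw [← Real.rpow_add hx]
    norm_num
  have hkey : ∀ᶠ x : ℝ in atTop, (40:ℝ)/3 * (Real.log x * Real.log x) + 2
      ≤ x ^ ((2:ℝ)/3) := by
    have hev := hlog2.def (by norm_num : (0:ℝ) < 3/100)
    filter_upwards [hev, eventually_ge_atTop (1:ℝ),
      (tendsto_rpow_atTop (by norm_num : (0:ℝ) < 2/3)).eventually_ge_atTop 4]
      with x hx h1 h4
    have hl0 : 0 ≤ Real.log x := Real.log_nonneg h1
    rw [Real.norm_eq_abs, Real.norm_eq_abs, abs_of_nonneg (by positivity),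
      abs_of_nonneg (by positivity)] at hx
    nlinarith
  have hE : ∀ᶠ x : ℝ in atTop, Fbd x ≤ 70 * Real.exp (-Real.log x) := by
    filter_upwards [hkey, eventually_ge_atTop (3:ℝ),
      (Real.tendsto_log_atTop).eventually_ge_atTop 1] with x hkx hx3 hlx
    have hx0 : (0:ℝ) < x := by linarith
    have hrw : x ^ ((7:ℝ)/3) = Real.exp (Real.log x * ((7:ℝ)/3)) := by
      rw [Real.rpow_def_of_pos hx0]
    unfold Fbd
    rw [hrw, mul_assoc, ← Real.exp_add]
    have hexp : Real.log x * ((7:ℝ)/3) + (1 - x ^ ((2:ℝ)/3) / 2) / (2 * Real.log x)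
        ≤ -Real.log x := by
      have hl0 : (0:ℝ) < 2 * Real.log x := by linarith
      have h : (1 - x ^ ((2:ℝ)/3) / 2) / (2 * Real.log x) ≤ -(10/3) * Real.log x := by
        rw [div_le_iff₀ hl0]
        nlinarith
      linarith
    have h2 := Real.exp_le_exp.mpr hexp
    nlinarith [Real.exp_pos (-Real.log x)]
  have hFnn : ∀ᶠ x : ℝ in atTop, 0 ≤ Fbd x := by
    filter_upwards [eventually_ge_atTop (0:ℝ)] with x hx
    unfold Fbd
    positivity
  have hlim : Tendsto (fun x : ℝ => 70 * Real.exp (-Real.log x)) atTop (nhds 0) := by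
    have h1 : Tendsto (fun x : ℝ => Real.exp (-Real.log x)) atTop (nhds 0) :=
      Real.tendsto_exp_atBot.comp (tendsto_neg_atBot_iff.mpr Real.tendsto_log_atTop)
    simpa using h1.const_mul (70:ℝ)
  exact tendsto_of_tendsto_of_tendsto_of_le_of_le' tendsto_const_nhds hlim hFnn hE

set_option maxHeartbeats 2000000 in
theorem edge_count_concentration
    {Ω : Type*} [MeasurableSpace Ω] (μ : Measure Ω) [IsProbabilityMeasure μ]
    (Z : ℕ → ℕ → Ω → ℕ) (hmeas : ∀ t i, Measurable (Z t i))
    (hsupp : ∀ t : ℕ, 3 ≤ t → ∀ i ω, 1 ≤ Z t i ω ∧ (Z t i ω : ℝ) < truncpt t)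
    (hdist : ∀ t : ℕ, 3 ≤ t → ∀ i_0 : ℕ, ∀ i : ℕ, 1 ≤ i → (i : ℝ) < truncpt t →
      μ {ω | Z t i_0 ω = i} = ENNReal.ofReal (betapp t / (i : ℝ) ^ 2))
    (hindep : ∀ t : ℕ, 3 ≤ t → iIndepFun (Z t) μ)
    (C : ℕ → Set Ω)
    (hC : ∀ t : ℕ, C t = {ω | ∀ τ ∈ Finset.Icc 1 t,
      |(∑ i ∈ Finset.Icc 1 τ, (Z t i ω : ℝ)) -
        ∫ ω', ∑ i ∈ Finset.Icc 1 τ, (Z t i ω' : ℝ) ∂μ| ≤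
        (t : ℝ) * (Real.log (t : ℝ)) ^ ((2 : ℝ) / 3)}) :
    Tendsto (fun t : ℕ => (Real.log (t : ℝ)) ^ 2 * (1 - (μ (C t)).toReal))
      atTop (nhds 0) := by
  have hlow : ∀ t : ℕ, 0 ≤ (Real.log (t : ℝ)) ^ 2 * (1 - (μ (C t)).toReal) := by
    intro t
    have h1 : (μ (C t)).toReal ≤ 1 := by
      have h := prob_le_one (μ := μ) (s := C t)
      have := ENNReal.toReal_mono ENNReal.one_ne_top h
      simpa using this
    nlinarith [sq_nonneg (Real.log (t : ℝ))]
  have hcomp : Tendsto (fun t : ℕ => Fbd (Real.log (t:ℝ))) atTop (nhds 0) :=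
    tendsto_Fbd.comp (Real.tendsto_log_atTop.comp tendsto_natCast_atTop_atTop)
  -- eventual facts
  have evb : ∀ᶠ t : ℕ in atTop, 1 ≤ Real.log (t:ℝ) :=
    (Real.tendsto_log_atTop.comp tendsto_natCast_atTop_atTop).eventually_ge_atTop 1
  have evc : ∀ᶠ t : ℕ in atTop, 1 ≤ Real.log (Real.log (t:ℝ)) :=
    (Real.tendsto_log_atTop.comp
      (Real.tendsto_log_atTop.comp tendsto_natCast_atTop_atTop)).eventually_ge_atTop 1
  have evd : ∀ᶠ t : ℕ in atTop, 2 ≤ (Real.log (t:ℝ)) ^ ((2:ℝ)/3) :=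
    ((tendsto_rpow_atTop (by norm_num : (0:ℝ) < 2/3)).comp
      (Real.tendsto_log_atTop.comp tendsto_natCast_atTop_atTop)).eventually_ge_atTop 2
  have eve : ∀ᶠ t : ℕ in atTop, 14 * Real.log (t:ℝ) + 2 ≤ (t:ℝ) := by
    have hreal : ∀ᶠ x : ℝ in atTop, 14 * Real.log x + 2 ≤ x := by
      have h := Real.isLittleO_log_id_atTop.def (by norm_num : (0:ℝ) < 1/15)
      filter_upwards [h, eventually_ge_atTop (30:ℝ)] with x hx h30
      rw [Real.norm_eq_abs, Real.norm_eq_abs, id] at hx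
      have : Real.log x ≤ (1/15) * x := by
        have h1 := le_abs_self (Real.log x)
        have h2 : |x| = x := abs_of_nonneg (by linarith)
        rw [h2] at hx
        linarith
      linarith
    exact tendsto_natCast_atTop_atTop.eventually hreal
  have hup : ∀ᶠ t : ℕ in atTop,
      (Real.log (t:ℝ))^2 * (1 - (μ (C t)).toReal) ≤ Fbd (Real.log (t:ℝ)) := by
    filter_upwards [eventually_ge_atTop 3, evb, evc, evd, eve] with t ht3 hl1 hw1 hl23 hte
    set ℓ := Real.log (t:ℝ) with hℓ
    set w := Real.log ℓ with hw
    have ht0 : (0:ℝ) < t := by positivity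
    have ht3R : (3:ℝ) ≤ (t:ℝ) := by exact_mod_cast ht3
    have hℓ0 : (0:ℝ) < ℓ := by linarith
    set T := truncpt t with hTset
    have hT1 : 1 < T := truncpt_gt_one ht3
    have hT0 : (0:ℝ) < T := by linarith
    have hTw : T = (t:ℝ) * w + 1 := by rw [hTset]; unfold truncpt; rw [← hℓ, ← hw]
    set a := (t:ℝ) * ℓ ^ ((2:ℝ)/3) / 2 with ha_def
    have ha : 0 ≤ a := by positivity
    set L := ⌈(6:ℝ) * ℓ ^ ((1:ℝ)/3)⌉₊ with hLdef
    have hl13 : (1:ℝ) ≤ ℓ ^ ((1:ℝ)/3) := by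
      calc (1:ℝ) = (1:ℝ) ^ ((1:ℝ)/3) := (Real.one_rpow _).symm
        _ ≤ ℓ ^ ((1:ℝ)/3) := Real.rpow_le_rpow (by norm_num) hl1 (by norm_num)
    have hL6 : (6:ℝ) * ℓ ^ ((1:ℝ)/3) ≤ (L:ℝ) := Nat.le_ceil _
    have hL1 : 1 ≤ L := Nat.one_le_ceil_iff.mpr (by positivity)
    have hLle : (L:ℝ) ≤ 7 * ℓ ^ ((1:ℝ)/3) := by
      have := Nat.ceil_lt_add_one (by positivity : (0:ℝ) ≤ (6:ℝ) * ℓ ^ ((1:ℝ)/3))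
      rw [← hLdef] at this
      linarith
    have h2L : 2 * L ≤ t := by
      have hl13l : ℓ ^ ((1:ℝ)/3) ≤ ℓ := by
        calc ℓ ^ ((1:ℝ)/3) ≤ ℓ ^ (1:ℝ) := Real.rpow_le_rpow_of_exponent_le hl1 (by norm_num)
          _ = ℓ := Real.rpow_one ℓ
      have : ((2 * L : ℕ) : ℝ) ≤ (t:ℝ) := by
        push_cast
        calc (2:ℝ) * L ≤ 2 * (7 * ℓ ^ ((1:ℝ)/3)) := by linarith
          _ = 14 * ℓ ^ ((1:ℝ)/3) := by ring
          _ ≤ 14 * ℓ := by linarith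
          _ ≤ (t:ℝ) := by rw [hℓ]; linarith [hte]
      exact_mod_cast this
    have hLt : L ≤ t := by omega
    set Δ := t / L with hΔdef
    have hΔ0 : 0 < Δ := Nat.div_pos hLt (by omega)
    set K := t / Δ + 1 with hKdef
    have hKΔ : t ≤ K * Δ := by
      have h1 := Nat.div_add_mod t Δ
      have h2 := Nat.mod_lt t hΔ0
      have h3 : K * Δ = (t / Δ) * Δ + Δ := by ring
      have h4 : (t / Δ) * Δ = Δ * (t / Δ) := Nat.mul_comm _ _
      omega
    set mbar := 1 + Real.log T with hmbardef
    have hmbar0 : 0 ≤ mbar := by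
      have := Real.log_nonneg hT1.le
      rw [hmbardef]; linarith
    have hwℓ : w ≤ ℓ := by
      rw [hw]
      have := Real.log_le_sub_one_of_pos hℓ0
      linarith
    have hℓt : ℓ ≤ (t:ℝ) - 1 := by
      rw [hℓ]; exact Real.log_le_sub_one_of_pos ht0
    have hTle : T ≤ (t:ℝ)^2 := by rw [hTw]; nlinarith
    have hlogT : Real.log T ≤ 2 * ℓ := by
      calc Real.log T ≤ Real.log ((t:ℝ)^2) := Real.log_le_log hT0 hTle
        _ = 2 * Real.log (t:ℝ) := by rw [Real.log_pow]; push_cast; ring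
        _ = 2 * ℓ := by rw [hℓ]
    have hmbar3 : mbar ≤ 3 * ℓ := by rw [hmbardef]; linarith
    have hdR : ∀ (i0 : ℕ) (k : ℕ), 1 ≤ k → (k:ℝ) < T →
        (μ {ω | Z t i0 ω = k}).toReal = betapp t / (k:ℝ)^2 := by
      intro i0 k hk1 hkT
      rw [hdist t ht3 i0 k hk1 hkT,
        ENNReal.toReal_ofReal (div_nonneg (betapp_nonneg ht3) (by positivity))]
    have hmbarALL : ∀ i, ∫ ω, (Z t i ω : ℝ) ∂μ ≤ mbar := by
      intro i
      rw [hmbardef]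
      exact EW_le μ (hmeas t i) hT1 (hsupp t ht3 i) (betapp_nonneg ht3)
        (betapp_le_one ht3) (hdR i)
    have hΔm : (Δ:ℝ) * mbar ≤ a := by
      have hΔcast : (Δ:ℝ) ≤ (t:ℝ) / (L:ℝ) := by rw [hΔdef]; exact Nat.cast_div_le
      have hLpos : (0:ℝ) < (L:ℝ) := by exact_mod_cast hL1
      have h6pos : (0:ℝ) < 6 * ℓ ^ ((1:ℝ)/3) := by positivity
      have hdiv : (t:ℝ) / (L:ℝ) ≤ (t:ℝ) / (6 * ℓ ^ ((1:ℝ)/3)) :=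
        div_le_div_of_nonneg_left ht0.le h6pos hL6
      have hid : ℓ ^ ((1:ℝ)/3) * ℓ ^ ((2:ℝ)/3) = ℓ := by
        rw [← Real.rpow_add hℓ0]; norm_num
      have heq : (t:ℝ) / (6 * ℓ ^ ((1:ℝ)/3)) * (3 * ℓ) = a := by
        rw [ha_def]
        have hu0 : (0:ℝ) < ℓ ^ ((1:ℝ)/3) := by positivity
        generalize hu : ℓ ^ ((1:ℝ)/3) = u at hid hu0 ⊢
        generalize hv : ℓ ^ ((2:ℝ)/3) = v at hid ⊢
        rw [← hid]
        field_simp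
        ring
      calc (Δ:ℝ) * mbar ≤ ((t:ℝ) / (L:ℝ)) * (3 * ℓ) := by
            refine mul_le_mul hΔcast hmbar3 hmbar0 (by positivity)
        _ ≤ ((t:ℝ) / (6 * ℓ ^ ((1:ℝ)/3))) * (3 * ℓ) := by
            refine mul_le_mul_of_nonneg_right hdiv (by positivity)
        _ = a := heq
    -- measurability of C t
    have hCm : MeasurableSet (C t) := by
      rw [hC]
      have hrw : {ω | ∀ τ ∈ Finset.Icc 1 t,
          |(∑ i ∈ Finset.Icc 1 τ, (Z t i ω : ℝ)) -
            ∫ ω', ∑ i ∈ Finset.Icc 1 τ, (Z t i ω' : ℝ) ∂μ| ≤ (t:ℝ) * ℓ ^ ((2:ℝ)/3)}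
          = ⋂ τ ∈ (Finset.Icc 1 t : Finset ℕ), {ω |
          |(∑ i ∈ Finset.Icc 1 τ, (Z t i ω : ℝ)) -
            ∫ ω', ∑ i ∈ Finset.Icc 1 τ, (Z t i ω' : ℝ) ∂μ| ≤ (t:ℝ) * ℓ ^ ((2:ℝ)/3)} := by
        ext ω; simp
      rw [hrw]
      refine Set.Finite.measurableSet_biInter (Finset.finite_toSet _) (fun τ _ => ?_)
      have hm : Measurable (fun ω => |(∑ i ∈ Finset.Icc 1 τ, (Z t i ω : ℝ)) -
          ∫ ω', ∑ i ∈ Finset.Icc 1 τ, (Z t i ω' : ℝ) ∂μ|) :=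
        ((Finset.measurable_sum _ (fun i _ => measW (hmeas t i))).sub measurable_const).abs
      exact measurableSet_le hm measurable_const
    have hcompl : 1 - (μ (C t)).toReal = (μ ((C t)ᶜ)).toReal := by
      rw [measure_compl hCm (measure_ne_top μ _), measure_univ,
        ENNReal.toReal_sub_of_le prob_le_one ENNReal.one_ne_top]
      simp
    have h2a : (t:ℝ) * ℓ ^ ((2:ℝ)/3) = 2 * a := by rw [ha_def]; ring
    have hsetc : (C t)ᶜ = {ω | ¬ ∀ τ ∈ Finset.Icc 1 t,
        |(∑ i ∈ Finset.Icc 1 τ, (Z t i ω : ℝ)) -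
          ∫ ω', ∑ i ∈ Finset.Icc 1 τ, (Z t i ω' : ℝ) ∂μ| ≤ 2 * a} := by
      rw [hC, ← h2a, Set.compl_setOf]
    have hbound := compl_bound μ (fun i => hmeas t i) hT1 (fun i ω => hsupp t ht3 i ω)
      (betapp_nonneg ht3) (betapp_le_one ht3) hdR (hindep t ht3) t Δ K hΔ0 hKΔ
      mbar a ha hmbar0 hmbarALL hΔm
    rw [hcompl, hsetc]
    -- final arithmetic
    have hKb : (K:ℝ) + 2 ≤ 35 * ℓ ^ ((1:ℝ)/3) := by
      have ht2ΔL : t ≤ 2 * Δ * L := by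
        have h1 := Nat.div_add_mod t L
        have h2 := Nat.mod_lt t (show 0 < L by omega)
        have h3 : L * Δ = Δ * L := Nat.mul_comm _ _
        have h4 : 2 * Δ * L = Δ * L + Δ * L := by ring
        have h5 : L ≤ Δ * L := Nat.le_mul_of_pos_left L hΔ0
        have h6 : L * (t / L) = L * Δ := by rw [hΔdef]
        omega
      have hKle : t / Δ ≤ 2 * L := by
        have h7 : (2 * L) * Δ = 2 * Δ * L := by ring
        have h8 : t ≤ Δ * (2 * L) := by
          have h9 : Δ * (2 * L) = 2 * Δ * L := by ring
          omega
        exact Nat.div_le_of_le_mul h8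
      have hKR : (K:ℝ) ≤ 2 * (L:ℝ) + 1 := by
        rw [hKdef]
        push_cast
        have : ((t / Δ : ℕ) : ℝ) ≤ ((2 * L : ℕ) : ℝ) := by exact_mod_cast hKle
        push_cast at this
        linarith
      calc (K:ℝ) + 2 ≤ 2 * (L:ℝ) + 3 := by linarith
        _ ≤ 2 * (7 * ℓ ^ ((1:ℝ)/3)) + 3 := by linarith
        _ ≤ 35 * ℓ ^ ((1:ℝ)/3) := by linarith
    have hexp_le : Real.exp (-(a/T) + (t:ℝ)/T)
        ≤ Real.exp ((1 - ℓ ^ ((2:ℝ)/3) / 2) / (2 * w)) := by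
      rw [Real.exp_le_exp]
      have hw0 : (0:ℝ) < w := by linarith
      have htw : (0:ℝ) < (t:ℝ) * w := by positivity
      have hT2 : T ≤ 2 * ((t:ℝ) * w) := by rw [hTw]; nlinarith
      have hta : (t:ℝ) - a ≤ 0 := by
        rw [ha_def]; nlinarith
      have hkey : (-(a/T) + (t:ℝ)/T) = ((t:ℝ) - a) / T := by ring
      rw [hkey]
      have hstep : ((t:ℝ) - a) / T ≤ ((t:ℝ) - a) / (2 * ((t:ℝ) * w)) := by
        rw [div_le_div_iff₀ hT0 (by positivity)]
        nlinarith
      have heq2 : ((t:ℝ) - a) / (2 * ((t:ℝ) * w)) = (1 - ℓ ^ ((2:ℝ)/3) / 2) / (2 * w) := by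
        rw [ha_def]
        rw [show (2:ℝ) * ((t:ℝ) * w) = (t:ℝ) * (2 * w) by ring,
          show (t:ℝ) - (t:ℝ) * ℓ ^ ((2:ℝ)/3) / 2 = (t:ℝ) * (1 - ℓ ^ ((2:ℝ)/3) / 2) by ring,
          mul_div_mul_left _ _ ht0.ne']
      linarith
    have hpow : ℓ^(2:ℕ) * (ℓ ^ ((1:ℝ)/3)) = ℓ ^ ((7:ℝ)/3) := by
      rw [← Real.rpow_natCast ℓ 2, ← Real.rpow_add hℓ0]
      norm_num
    have hexp_pos := Real.exp_pos (-(a/T) + (t:ℝ)/T)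
    have hl2 : (0:ℝ) ≤ ℓ^(2:ℕ) := sq_nonneg ℓ
    calc ℓ^2 * (μ {ω | ¬ ∀ τ ∈ Finset.Icc 1 t,
          |(∑ i ∈ Finset.Icc 1 τ, (Z t i ω : ℝ)) -
            ∫ ω', ∑ i ∈ Finset.Icc 1 τ, (Z t i ω' : ℝ) ∂μ| ≤ 2 * a}).toReal
        ≤ ℓ^2 * (((K:ℝ) + 2) * (2 * Real.exp (-(a/T) + (t:ℝ)/T))) := by
          exact mul_le_mul_of_nonneg_left hbound hl2
      _ ≤ ℓ^2 * ((35 * ℓ ^ ((1:ℝ)/3)) * (2 * Real.exp ((1 - ℓ ^ ((2:ℝ)/3) / 2) / (2 * w)))) := by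
          refine mul_le_mul_of_nonneg_left ?_ hl2
          refine mul_le_mul hKb ?_ (by positivity) (by positivity)
          exact mul_le_mul_of_nonneg_left hexp_le (by norm_num)
      _ = Fbd ℓ := by
          unfold Fbd
          rw [← hw, ← hpow]
          ring
  exact tendsto_of_tendsto_of_tendsto_of_le_of_le' tendsto_const_nhds hcomp
    (Eventually.of_forall hlow) hup
end

section
/- Set t₀ = t / log log t, let Z₁, …, Z_t be i.i.d. copies of Z(t), and L(τ) = ∑_{i=1}^τ Z_i. Then for every ε > 0 there exists T such that for all t ≥ T and all integers s with t₀ ≤ s ≤ t: (i) |E[L(τ)] − τ·β''·log t| ≤ ε·log^{−1/4}t · τ·β''·log t for every t₀ ≤ τ ≤ s; and (ii) on the event that |L(σ) − E[L(σ)]| ≤ t·log^{2/3} t for all 1 ≤ σ ≤ s, one has |L(τ) − τ·β''·log t| ≤ ε·log^{−1/4}t · τ·β''·log t for every t₀ ≤ τ ≤ s. -/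
set_option maxHeartbeats 1000000

open MeasureTheory ProbabilityTheory Real Filter

private lemma sum_inv_sq_le : ∀ m : ℕ, 1 ≤ m →
    ∑ i ∈ Finset.Icc 1 m, (1:ℝ) / (i:ℝ)^2 ≤ 2 - 1/(m:ℝ) := by
  intro m
  induction m with
  | zero => omega
  | succ n ih =>
    intro _
    rcases Nat.eq_zero_or_pos n with hn | hn
    · subst hn; norm_num
    · rw [Finset.sum_Icc_succ_top (by omega : 1 ≤ n + 1)]
      have h1 := ih hn
      have hnR : (1:ℝ) ≤ (n:ℝ) := by exact_mod_cast hn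
      have key : (1:ℝ) / ((n:ℝ)+1)^2 ≤ 1/(n:ℝ) - 1/((n:ℝ)+1) := by
        have h2 : (1:ℝ)/(n:ℝ) - 1/((n:ℝ)+1) = 1 / ((n:ℝ) * ((n:ℝ)+1)) := by
          field_simp
          ring
        rw [h2]
        apply one_div_le_one_div_of_le
        · positivity
        · nlinarith
      push_cast
      linarith

private lemma exp_of_dist {Ω : Type*} [MeasurableSpace Ω] (μ : Measure Ω)
    [IsProbabilityMeasure μ] (W : Ω → ℕ) (hW : Measurable W) (m : ℕ) (b : ℝ)
    (hsupp : ∀ ω, 1 ≤ W ω ∧ W ω ≤ m)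
    (hd : ∀ i ∈ Finset.Icc 1 m, μ {ω | W ω = i} = ENNReal.ofReal (b / (i:ℝ)^2)) :
    0 < b ∧ b * ∑ i ∈ Finset.Icc 1 m, (1:ℝ)/(i:ℝ)^2 = 1 ∧
      ∫ ω, (W ω : ℝ) ∂μ = b * ((harmonic m : ℚ) : ℝ) := by
  have hmeaset : ∀ i : ℕ, MeasurableSet {ω | W ω = i} := fun i =>
    hW (measurableSet_singleton i)
  have hcover : (Set.univ : Set Ω) = ⋃ i ∈ Finset.Icc 1 m, {ω | W ω = i} := by
    ext ω
    simp only [Set.mem_univ, Set.mem_iUnion, Set.mem_setOf_eq, true_iff, Finset.mem_Icc]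
    exact ⟨W ω, ⟨(hsupp ω).1, (hsupp ω).2⟩, rfl⟩
  have hdisj : Set.PairwiseDisjoint (↑(Finset.Icc 1 m)) (fun i => {ω | W ω = i}) := by
    intro i _ j _ hij
    simp only [Set.disjoint_left, Set.mem_setOf_eq]
    intro ω h1 h2
    exact hij (h1 ▸ h2 ▸ rfl)
  have hone : (1 : ENNReal) = ∑ i ∈ Finset.Icc 1 m, ENNReal.ofReal (b / (i:ℝ)^2) := by
    calc (1 : ENNReal) = μ Set.univ := (measure_univ).symm
    _ = μ (⋃ i ∈ Finset.Icc 1 m, {ω | W ω = i}) := by rw [← hcover]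
    _ = ∑ i ∈ Finset.Icc 1 m, μ {ω | W ω = i} :=
        measure_biUnion_finset hdisj (fun i _ => hmeaset i)
    _ = ∑ i ∈ Finset.Icc 1 m, ENNReal.ofReal (b / (i:ℝ)^2) :=
        Finset.sum_congr rfl (fun i hi => hd i hi)
  have hb : 0 < b := by
    by_contra hb
    push_neg at hb
    have : ∀ i ∈ Finset.Icc 1 m, ENNReal.ofReal (b / (i:ℝ)^2) = 0 := by
      intro i _
      exact ENNReal.ofReal_eq_zero.mpr (div_nonpos_of_nonpos_of_nonneg hb (sq_nonneg _))
    rw [Finset.sum_congr rfl this, Finset.sum_const, smul_zero] at hone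
    exact one_ne_zero hone
  have hnn : ∀ i ∈ Finset.Icc 1 m, (0:ℝ) ≤ b / (i:ℝ)^2 := fun i _ =>
    div_nonneg hb.le (sq_nonneg _)
  have hsum1 : ∑ i ∈ Finset.Icc 1 m, b / (i:ℝ)^2 = 1 := by
    rw [← ENNReal.ofReal_sum_of_nonneg hnn] at hone
    exact ENNReal.ofReal_eq_one.mp hone.symm
  refine ⟨hb, ?_, ?_⟩
  · calc b * ∑ i ∈ Finset.Icc 1 m, (1:ℝ)/(i:ℝ)^2
        = ∑ i ∈ Finset.Icc 1 m, b / (i:ℝ)^2 := by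
          rw [Finset.mul_sum]; exact Finset.sum_congr rfl (fun i _ => by ring)
      _ = 1 := hsum1
  · have hpt : ∀ ω, (W ω : ℝ) =
        ∑ j ∈ Finset.Icc 1 m, Set.indicator {ω' | W ω' = j} (fun _ => (j:ℝ)) ω := by
      intro ω
      have : ∀ j, Set.indicator {ω' | W ω' = j} (fun _ => (j:ℝ)) ω
          = if W ω = j then (j:ℝ) else 0 := by
        intro j; simp [Set.indicator_apply, Set.mem_setOf_eq]
      simp only [this]
      rw [Finset.sum_ite_eq (Finset.Icc 1 m) (W ω) (fun j => (j:ℝ))]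
      simp [Finset.mem_Icc, (hsupp ω).1, (hsupp ω).2]
    have hintg : ∀ j ∈ Finset.Icc 1 m,
        Integrable (Set.indicator {ω' | W ω' = j} (fun _ => (j:ℝ))) μ := fun j _ =>
      (integrable_const (j:ℝ)).indicator (hmeaset j)
    calc ∫ ω, (W ω : ℝ) ∂μ
        = ∫ ω, ∑ j ∈ Finset.Icc 1 m,
            Set.indicator {ω' | W ω' = j} (fun _ => (j:ℝ)) ω ∂μ := by
          congr 1; funext ω; exact hpt ω
      _ = ∑ j ∈ Finset.Icc 1 m,
            ∫ ω, Set.indicator {ω' | W ω' = j} (fun _ => (j:ℝ)) ω ∂μ :=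
          integral_finset_sum _ hintg
      _ = ∑ j ∈ Finset.Icc 1 m, (μ {ω' | W ω' = j}).toReal • (j:ℝ) :=
          Finset.sum_congr rfl (fun j _ => integral_indicator_const (j:ℝ) (hmeaset j))
      _ = ∑ j ∈ Finset.Icc 1 m, (b / (j:ℝ)^2) * (j:ℝ) := by
          refine Finset.sum_congr rfl (fun j hj => ?_)
          rw [hd j hj, ENNReal.toReal_ofReal (hnn j hj), smul_eq_mul]
      _ = b * ∑ j ∈ Finset.Icc 1 m, ((j:ℝ))⁻¹ := by
          rw [Finset.mul_sum]
          refine Finset.sum_congr rfl (fun j hj => ?_)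
          have hj1 : 1 ≤ j := (Finset.mem_Icc.mp hj).1
          have : (j:ℝ) ≠ 0 := by positivity
          field_simp
      _ = b * ((harmonic m : ℚ) : ℝ) := by
          congr 1
          rw [harmonic_eq_sum_Icc]
          push_cast
          rfl

private lemma eventual_facts (ε : ℝ) (hε : 0 < ε) :
    ∃ T : ℕ, 3 ≤ T ∧ ∀ t : ℕ, T ≤ t →
      1 ≤ Real.log (Real.log t) ∧
      2 + Real.log (Real.log t) ≤ ε/2 * (Real.log t) ^ ((3:ℝ)/4) ∧
      Real.log (Real.log t) ≤ ε/4 * (Real.log t) ^ ((1:ℝ)/12) ∧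
      1 ≤ Real.log t := by
  have hQ : ∀ᶠ u : ℝ in atTop,
      1 ≤ Real.log u ∧ 2 + Real.log u ≤ ε/2 * u ^ ((3:ℝ)/4) ∧
        Real.log u ≤ ε/4 * u ^ ((1:ℝ)/12) ∧ 1 ≤ u := by
    have h34 := (isLittleO_log_rpow_atTop (by norm_num : (0:ℝ) < 3/4)).def
      (by positivity : (0:ℝ) < ε/4)
    have h112 := (isLittleO_log_rpow_atTop (by norm_num : (0:ℝ) < 1/12)).def
      (by positivity : (0:ℝ) < ε/4)
    have hbig : ∀ᶠ u : ℝ in atTop, 8/ε ≤ u ^ ((3:ℝ)/4) :=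
      (tendsto_rpow_atTop (by norm_num : (0:ℝ) < 3/4)).eventually_ge_atTop _
    have hlog1 : ∀ᶠ u : ℝ in atTop, 1 ≤ Real.log u :=
      Real.tendsto_log_atTop.eventually_ge_atTop 1
    filter_upwards [h34, h112, hbig, hlog1, eventually_ge_atTop (1:ℝ)]
      with u a b c d e
    have hu0 : (0:ℝ) ≤ u := by linarith
    have h34' : Real.log u ≤ ε/4 * u ^ ((3:ℝ)/4) := by
      calc Real.log u ≤ |Real.log u| := le_abs_self _
        _ ≤ ε/4 * |u ^ ((3:ℝ)/4)| := by
            simpa [Real.norm_eq_abs] using a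
        _ = ε/4 * u ^ ((3:ℝ)/4) := by rw [abs_of_nonneg (Real.rpow_nonneg hu0 _)]
    have h112' : Real.log u ≤ ε/4 * u ^ ((1:ℝ)/12) := by
      calc Real.log u ≤ |Real.log u| := le_abs_self _
        _ ≤ ε/4 * |u ^ ((1:ℝ)/12)| := by
            simpa [Real.norm_eq_abs] using b
        _ = ε/4 * u ^ ((1:ℝ)/12) := by rw [abs_of_nonneg (Real.rpow_nonneg hu0 _)]
    have h2 : 2 ≤ ε/4 * u ^ ((3:ℝ)/4) := by
      have h8 : ε/4 * (8/ε) ≤ ε/4 * u ^ ((3:ℝ)/4) :=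
        mul_le_mul_of_nonneg_left c (by positivity)
      have : ε/4 * (8/ε) = 2 := by field_simp; ring
      linarith
    exact ⟨d, by linarith, h112', e⟩
  have hN : ∀ᶠ t : ℕ in atTop,
      1 ≤ Real.log (Real.log t) ∧
      2 + Real.log (Real.log t) ≤ ε/2 * (Real.log t) ^ ((3:ℝ)/4) ∧
      Real.log (Real.log t) ≤ ε/4 * (Real.log t) ^ ((1:ℝ)/12) ∧
      1 ≤ Real.log t :=
    (Real.tendsto_log_atTop.comp tendsto_natCast_atTop_atTop).eventually hQ
  obtain ⟨T₁, hT₁⟩ := eventually_atTop.mp hN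
  exact ⟨max T₁ 3, le_max_right _ _, fun t ht => hT₁ t (le_trans (le_max_left _ _) ht)⟩

theorem edge_count_asymptotics
    {Ω : Type*} [MeasurableSpace Ω] (μ : Measure Ω) [IsProbabilityMeasure μ]
    (Z : ℕ → ℕ → Ω → ℕ) (hmeas : ∀ t i, Measurable (Z t i))
    (hsupp : ∀ t : ℕ, 3 ≤ t → ∀ i ω, 1 ≤ Z t i ω ∧ (Z t i ω : ℝ) < truncpt t)
    (hdist : ∀ t : ℕ, 3 ≤ t → ∀ i_0 : ℕ, ∀ i : ℕ, 1 ≤ i → (i : ℝ) < truncpt t →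
      μ {ω | Z t i_0 ω = i} = ENNReal.ofReal (betapp t / (i : ℝ) ^ 2))
    (hindep : ∀ t : ℕ, 3 ≤ t → iIndepFun (Z t) μ)
    (L : ℕ → ℕ → Ω → ℝ)
    (hL : ∀ t τ ω, L t τ ω = ∑ i ∈ Finset.Icc 1 τ, (Z t i ω : ℝ)) :
    ∀ ε : ℝ, 0 < ε → ∃ T : ℕ, ∀ t : ℕ, T ≤ t → ∀ s : ℕ,
      (t : ℝ) / Real.log (Real.log (t : ℝ)) ≤ (s : ℝ) → s ≤ t →
      (∀ τ : ℕ, (t : ℝ) / Real.log (Real.log (t : ℝ)) ≤ (τ : ℝ) → τ ≤ s →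
        |(∫ ω, L t τ ω ∂μ) - (τ : ℝ) * betapp t * Real.log (t : ℝ)| ≤
          ε * (Real.log (t : ℝ)) ^ (-(1 : ℝ) / 4) *
            ((τ : ℝ) * betapp t * Real.log (t : ℝ))) ∧
      (∀ ω : Ω,
        (∀ σ : ℕ, 1 ≤ σ → σ ≤ s →
          |L t σ ω - ∫ ω', L t σ ω' ∂μ| ≤
            (t : ℝ) * (Real.log (t : ℝ)) ^ ((2 : ℝ) / 3)) →
        ∀ τ : ℕ, (t : ℝ) / Real.log (Real.log (t : ℝ)) ≤ (τ : ℝ) → τ ≤ s →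
          |L t τ ω - (τ : ℝ) * betapp t * Real.log (t : ℝ)| ≤
            ε * (Real.log (t : ℝ)) ^ (-(1 : ℝ) / 4) *
              ((τ : ℝ) * betapp t * Real.log (t : ℝ))) := by
  intro ε hε
  obtain ⟨T, hT3, hTfacts⟩ := eventual_facts ε hε
  refine ⟨T, ?_⟩
  intro t ht s hs1 hs2
  obtain ⟨hll1, hB, hC, hlg1⟩ := hTfacts t ht
  have ht3 : 3 ≤ t := le_trans hT3 ht
  set lg := Real.log (t:ℝ) with hlgdef
  set ll := Real.log lg with hlldef
  have hlgpos : 0 < lg := by linarith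
  have hllpos : 0 < ll := by linarith
  have htR : (3:ℝ) ≤ (t:ℝ) := by exact_mod_cast ht3
  set x := (t:ℝ) * ll with hxdef
  have hx3 : (3:ℝ) ≤ x := by nlinarith
  have hx0 : (0:ℝ) ≤ x := by linarith
  set m := Nat.ceil x with hmdef
  have hm1 : 1 ≤ m := Nat.ceil_pos.mpr (by linarith)
  have hxm : x ≤ (m:ℝ) := Nat.le_ceil x
  have hmx1 : (m:ℝ) < x + 1 := Nat.ceil_lt_add_one hx0
  have htrunc : truncpt t = x + 1 := rfl
  -- support in [1, m]
  have hsupp' : ∀ i ω, 1 ≤ Z t i ω ∧ Z t i ω ≤ m := by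
    intro i ω
    refine ⟨(hsupp t ht3 i ω).1, ?_⟩
    have h := (hsupp t ht3 i ω).2
    rw [htrunc] at h
    have h2 : (Z t i ω : ℝ) < (m:ℝ) + 1 := lt_of_lt_of_le h (by linarith)
    have h3 : Z t i ω < m + 1 := by exact_mod_cast h2
    omega
  have hd' : ∀ i_0 : ℕ, ∀ i ∈ Finset.Icc 1 m,
      μ {ω | Z t i_0 ω = i} = ENNReal.ofReal (betapp t / (i:ℝ)^2) := by
    intro i_0 i hi
    obtain ⟨hi1, him⟩ := Finset.mem_Icc.mp hi
    refine hdist t ht3 i_0 i hi1 ?_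
    rw [htrunc]
    have : (i:ℝ) ≤ (m:ℝ) := by exact_mod_cast him
    linarith
  set b := betapp t with hbdef
  set H := ((harmonic m : ℚ) : ℝ) with hHdef
  obtain ⟨hb, hbsum, -⟩ := exp_of_dist μ (Z t 1) (hmeas t 1) m b (hsupp' 1) (hd' 1)
  have hmR1 : (1:ℝ) ≤ (m:ℝ) := by exact_mod_cast hm1
  have hS2 : ∑ i ∈ Finset.Icc 1 m, (1:ℝ)/(i:ℝ)^2 ≤ 2 := by
    have := sum_inv_sq_le m hm1
    have h0 : (0:ℝ) ≤ 1/(m:ℝ) := by positivity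
    linarith
  have hbhalf : 1/2 ≤ b := by nlinarith [mul_le_mul_of_nonneg_left hS2 hb.le]
  have hintZ : ∀ i, ∫ ω, (Z t i ω : ℝ) ∂μ = b * H := fun i =>
    (exp_of_dist μ (Z t i) (hmeas t i) m b (hsupp' i) (hd' i)).2.2
  have hintegrable : ∀ i, Integrable (fun ω => (Z t i ω : ℝ)) μ := by
    intro i
    refine Integrable.mono' (integrable_const (m:ℝ))
      ((measurable_from_top.comp (hmeas t i)).aestronglyMeasurable)
      (ae_of_all μ (fun ω => ?_))
    rw [Real.norm_eq_abs, abs_of_nonneg (Nat.cast_nonneg _)]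
    exact_mod_cast (hsupp' i ω).2
  have hEL : ∀ τ : ℕ, ∫ ω, L t τ ω ∂μ = (τ:ℝ) * (b * H) := by
    intro τ
    calc ∫ ω, L t τ ω ∂μ = ∫ ω, ∑ i ∈ Finset.Icc 1 τ, (Z t i ω : ℝ) ∂μ := by
          simp only [hL]
      _ = ∑ i ∈ Finset.Icc 1 τ, ∫ ω, (Z t i ω : ℝ) ∂μ :=
          integral_finset_sum _ (fun i _ => hintegrable i)
      _ = ∑ _i ∈ Finset.Icc 1 τ, (b * H) := Finset.sum_congr rfl (fun i _ => hintZ i)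
      _ = (τ:ℝ) * (b * H) := by
          rw [Finset.sum_const, Nat.card_Icc]
          simp [nsmul_eq_mul]
  -- bounds on H
  have hlogx : Real.log x = lg + Real.log ll := by
    rw [hxdef, Real.log_mul (by linarith) (by linarith), hlgdef]
  have hHub : H - lg ≤ 2 + ll := by
    have h1 : H ≤ 1 + Real.log m := harmonic_le_one_add_log m
    have h2 : Real.log (m:ℝ) ≤ Real.log (2*x) :=
      Real.log_le_log (by linarith) (by linarith)
    have h3 : Real.log (2*x) = Real.log 2 + Real.log x :=
      Real.log_mul (by norm_num) (by linarith)
    have h4 : Real.log 2 ≤ 1 := by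
      have := Real.log_le_sub_one_of_pos (by norm_num : (0:ℝ) < 2)
      linarith
    have h5 : Real.log ll ≤ ll - 1 := Real.log_le_sub_one_of_pos hllpos
    rw [hlogx] at h3
    linarith
  have hHlb : lg ≤ H := by
    have h1 : Real.log ((m:ℝ)+1) ≤ H := by
      have := log_add_one_le_harmonic m
      push_cast at this
      exact this
    have h2 : Real.log x ≤ Real.log ((m:ℝ)+1) :=
      Real.log_le_log (by linarith) (by linarith)
    have h3 : 0 ≤ Real.log ll := Real.log_nonneg hll1
    rw [hlogx] at h2
    linarith
  have hY0 : (0:ℝ) ≤ lg ^ ((3:ℝ)/4) := Real.rpow_nonneg hlgpos.le _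
  have hHabs : |H - lg| ≤ ε/2 * lg ^ ((3:ℝ)/4) := by
    rw [abs_le]
    constructor
    · nlinarith
    · linarith
  have hY : lg ^ (-(1:ℝ)/4) * lg = lg ^ ((3:ℝ)/4) := by
    calc lg ^ (-(1:ℝ)/4) * lg = lg ^ (-(1:ℝ)/4) * lg ^ (1:ℝ) := by rw [Real.rpow_one]
      _ = lg ^ (-(1:ℝ)/4 + 1) := (Real.rpow_add hlgpos _ _).symm
      _ = lg ^ ((3:ℝ)/4) := by norm_num
  have hY2 : lg ^ ((1:ℝ)/12) * lg ^ ((2:ℝ)/3) = lg ^ ((3:ℝ)/4) := by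
    rw [← Real.rpow_add hlgpos]
    norm_num
  have hkey : ∀ τ : ℕ, |(τ:ℝ) * (b * H) - (τ:ℝ) * b * lg| ≤
      (τ:ℝ) * b * (ε/2 * lg ^ ((3:ℝ)/4)) := by
    intro τ
    have hre : (τ:ℝ) * (b * H) - (τ:ℝ) * b * lg = ((τ:ℝ) * b) * (H - lg) := by ring
    have hτb : (0:ℝ) ≤ (τ:ℝ) * b := mul_nonneg (Nat.cast_nonneg τ) hb.le
    rw [hre, abs_mul, abs_of_nonneg hτb]
    exact mul_le_mul_of_nonneg_left hHabs hτb
  have hRHS : ∀ τ : ℕ, ε * lg ^ (-(1:ℝ)/4) * ((τ:ℝ) * b * lg) =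
      (τ:ℝ) * b * (ε * lg ^ ((3:ℝ)/4)) := by
    intro τ
    rw [← hY]
    ring
  constructor
  · intro τ hτlb hτub
    rw [hEL τ]
    calc |(τ:ℝ) * (b * H) - (τ:ℝ) * b * lg|
        ≤ (τ:ℝ) * b * (ε/2 * lg ^ ((3:ℝ)/4)) := hkey τ
      _ ≤ (τ:ℝ) * b * (ε * lg ^ ((3:ℝ)/4)) := by
          have hh : ε/2 * lg ^ ((3:ℝ)/4) ≤ ε * lg ^ ((3:ℝ)/4) := by nlinarith
          exact mul_le_mul_of_nonneg_left hh (mul_nonneg (Nat.cast_nonneg τ) hb.le)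
      _ = ε * lg ^ (-(1:ℝ)/4) * ((τ:ℝ) * b * lg) := (hRHS τ).symm
  · intro ω hcond τ hτlb hτub
    have htpos : (0:ℝ) < (t:ℝ) := by linarith
    have hτRpos : (0:ℝ) < (τ:ℝ) := lt_of_lt_of_le (div_pos htpos hllpos) hτlb
    have hτ1 : 1 ≤ τ := by
      rcases Nat.eq_zero_or_pos τ with h | h
      · rw [h] at hτRpos; norm_num at hτRpos
      · exact h
    have htri := hcond τ hτ1 hτub
    rw [hEL τ] at htri
    have hll0 : (0:ℝ) < (t:ℝ)/ll := div_pos htpos hllpos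
    have hmain : (t:ℝ) * lg ^ ((2:ℝ)/3) ≤ (τ:ℝ) * b * (ε/2 * lg ^ ((3:ℝ)/4)) := by
      have h2 : (t:ℝ)/ll * (1/2) ≤ (τ:ℝ) * b :=
        mul_le_mul hτlb hbhalf (by norm_num) (le_trans hll0.le hτlb)
      have h3 : ll * lg ^ ((2:ℝ)/3) ≤ ε/4 * lg ^ ((3:ℝ)/4) := by
        calc ll * lg ^ ((2:ℝ)/3)
            ≤ (ε/4 * lg ^ ((1:ℝ)/12)) * lg ^ ((2:ℝ)/3) :=
              mul_le_mul_of_nonneg_right hC (Real.rpow_nonneg hlgpos.le _)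
          _ = ε/4 * lg ^ ((3:ℝ)/4) := by rw [mul_assoc, hY2]
      have h4 : (t:ℝ) * lg ^ ((2:ℝ)/3) = (t:ℝ)/ll * (ll * lg ^ ((2:ℝ)/3)) := by
        field_simp
      rw [h4]
      calc (t:ℝ)/ll * (ll * lg ^ ((2:ℝ)/3))
          ≤ (t:ℝ)/ll * (ε/4 * lg ^ ((3:ℝ)/4)) :=
            mul_le_mul_of_nonneg_left h3 hll0.le
        _ = ((t:ℝ)/ll * (1/2)) * (ε/2 * lg ^ ((3:ℝ)/4)) := by ring
        _ ≤ (τ:ℝ) * b * (ε/2 * lg ^ ((3:ℝ)/4)) :=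
            mul_le_mul_of_nonneg_right h2 (by positivity)
    calc |L t τ ω - (τ:ℝ) * b * lg|
        ≤ |L t τ ω - (τ:ℝ) * (b * H)| + |(τ:ℝ) * (b * H) - (τ:ℝ) * b * lg| :=
          abs_sub_le _ _ _
      _ ≤ (t:ℝ) * lg ^ ((2:ℝ)/3) + (τ:ℝ) * b * (ε/2 * lg ^ ((3:ℝ)/4)) :=
          add_le_add htri (hkey τ)
      _ ≤ (τ:ℝ) * b * (ε/2 * lg ^ ((3:ℝ)/4)) + (τ:ℝ) * b * (ε/2 * lg ^ ((3:ℝ)/4)) :=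
          add_le_add hmain le_rfl
      _ = (τ:ℝ) * b * (ε * lg ^ ((3:ℝ)/4)) := by ring
      _ = ε * lg ^ (-(1:ℝ)/4) * ((τ:ℝ) * b * lg) := (hRHS τ).symm
end

section
/- The limiting degree distribution of the PARID-model with exponent 2 is a probability distribution: the series ∑_{k=1}^∞ b_k converges and equals 1, where b_k = (2β(2) / (k(k+1)(k+2))) · ∑_{i=1}^k (1 + 1/i). Equivalently, ∑_{k=1}^∞ (2 / (k(k+1)(k+2))) · ∑_{i=1}^k (1 + 1/i) = π²/6. -/
open Finset Filter Topology

private lemma icc_sum_eq (n : ℕ) :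
    ∑ i ∈ Finset.Icc 1 n, (1 + 1 / (i : ℝ)) =
      (n : ℝ) + ∑ i ∈ Finset.range n, 1 / ((i : ℝ) + 1) := by
  induction n with
  | zero => simp
  | succ n ih =>
    rw [Finset.sum_Icc_succ_top (by omega), ih, Finset.sum_range_succ]
    push_cast
    ring

private lemma partial_sum_eq (N : ℕ) :
    ∑ k ∈ Finset.range N, (2 / (((k : ℝ) + 1) * ((k : ℝ) + 2) * ((k : ℝ) + 3)) *
        ∑ i ∈ Finset.Icc 1 (k + 1), (1 + 1 / (i : ℝ))) =
      (∑ i ∈ Finset.range N, 1 / ((i : ℝ) + 1) ^ 2) + 1 / ((N : ℝ) + 1) - 2 / ((N : ℝ) + 2)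
        - (∑ i ∈ Finset.range N, 1 / ((i : ℝ) + 1)) / (((N : ℝ) + 1) * ((N : ℝ) + 2)) := by
  induction N with
  | zero => norm_num
  | succ N ih =>
    rw [Finset.sum_range_succ, ih, icc_sum_eq, Finset.sum_range_succ,
      Finset.sum_range_succ (fun i => 1 / ((i : ℝ) + 1) ^ 2)]
    set h : ℝ := ∑ i ∈ Finset.range N, 1 / ((i : ℝ) + 1) with hh
    push_cast
    have h1 : ((N : ℝ) + 1) ≠ 0 := by positivity
    have h2 : ((N : ℝ) + 2) ≠ 0 := by positivity
    have h3 : ((N : ℝ) + 3) ≠ 0 := by positivity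
    field_simp
    ring

private lemma tendsto_c_div (c a : ℝ) (ha : 0 < a) :
    Tendsto (fun n : ℕ => c / ((n : ℝ) + a)) atTop (𝓝 0) :=
  Tendsto.div_atTop tendsto_const_nhds
    (tendsto_atTop_add_const_right _ a tendsto_natCast_atTop_atTop)

private lemma hassum2 :
    HasSum (fun k : ℕ =>
      2 / (((k : ℝ) + 1) * ((k : ℝ) + 2) * ((k : ℝ) + 3)) *
        ∑ i ∈ Finset.Icc 1 (k + 1), (1 + 1 / (i : ℝ))) (Real.pi ^ 2 / 6) := by
  rw [hasSum_iff_tendsto_nat_of_nonneg]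
  · have heq : ∀ N : ℕ, ∑ k ∈ Finset.range N,
        (2 / (((k : ℝ) + 1) * ((k : ℝ) + 2) * ((k : ℝ) + 3)) *
          ∑ i ∈ Finset.Icc 1 (k + 1), (1 + 1 / (i : ℝ))) =
        (∑ i ∈ Finset.range N, 1 / ((i : ℝ) + 1) ^ 2) + 1 / ((N : ℝ) + 1) - 2 / ((N : ℝ) + 2)
          - (∑ i ∈ Finset.range N, 1 / ((i : ℝ) + 1)) / (((N : ℝ) + 1) * ((N : ℝ) + 2)) :=
      partial_sum_eq
    simp only [heq]
    have hP : Tendsto (fun N : ℕ => ∑ i ∈ Finset.range N, 1 / ((i : ℝ) + 1) ^ 2) atTop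
        (𝓝 (Real.pi ^ 2 / 6)) := by
      have := hasSum_zeta_two.tendsto_sum_nat
      have h2 := this.comp (tendsto_add_atTop_nat 1)
      convert h2 using 2 with N
      simp only [Function.comp]
      rw [Finset.sum_range_succ' (fun i => (1 : ℝ) / (i : ℝ) ^ 2)]
      push_cast
      norm_num
    have hA : Tendsto (fun N : ℕ => 1 / ((N : ℝ) + 1)) atTop (𝓝 0) :=
      tendsto_c_div 1 1 one_pos
    have hB : Tendsto (fun N : ℕ => 2 / ((N : ℝ) + 2)) atTop (𝓝 0) :=
      tendsto_c_div 2 2 two_pos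
    have hC : Tendsto (fun N : ℕ =>
        (∑ i ∈ Finset.range N, 1 / ((i : ℝ) + 1)) / (((N : ℝ) + 1) * ((N : ℝ) + 2))) atTop
        (𝓝 0) := by
      apply squeeze_zero (g := fun N : ℕ => 1 / ((N : ℝ) + 2))
      · intro N
        positivity
      · intro N
        have hsum : (∑ i ∈ Finset.range N, 1 / ((i : ℝ) + 1)) ≤ (N : ℝ) := by
          calc (∑ i ∈ Finset.range N, 1 / ((i : ℝ) + 1)) ≤ ∑ i ∈ Finset.range N, 1 := by
                apply Finset.sum_le_sum
                intro i _
                rw [div_le_one (by positivity)]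
                linarith [Nat.cast_nonneg (α := ℝ) i]
            _ = (N : ℝ) := by simp
        rw [div_le_div_iff₀ (by positivity) (by positivity)]
        calc (∑ i ∈ Finset.range N, 1 / ((i : ℝ) + 1)) * ((N : ℝ) + 2) ≤
              (N : ℝ) * ((N : ℝ) + 2) := by
              apply mul_le_mul_of_nonneg_right hsum (by positivity)
          _ ≤ 1 * (((N : ℝ) + 1) * ((N : ℝ) + 2)) := by nlinarith [Nat.cast_nonneg (α := ℝ) N]
      · exact tendsto_c_div 1 2 two_pos
    have := ((hP.add hA).sub hB).sub hC
    simpa using this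
  · intro k
    have : (0 : ℝ) ≤ ∑ i ∈ Finset.Icc 1 (k + 1), (1 + 1 / (i : ℝ)) := by
      apply Finset.sum_nonneg
      intro i _
      positivity
    positivity

theorem limiting_degree_distribution_sums_to_one :
    HasSum (fun k : ℕ =>
      2 * (6 / Real.pi ^ 2) / (((k : ℝ) + 1) * ((k : ℝ) + 2) * ((k : ℝ) + 3)) *
        ∑ i ∈ Finset.Icc 1 (k + 1), (1 + 1 / (i : ℝ))) 1 ∧
    HasSum (fun k : ℕ =>
      2 / (((k : ℝ) + 1) * ((k : ℝ) + 2) * ((k : ℝ) + 3)) *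
        ∑ i ∈ Finset.Icc 1 (k + 1), (1 + 1 / (i : ℝ))) (Real.pi ^ 2 / 6) := by
  have h2 := hassum2
  constructor
  · have hpi : Real.pi ^ 2 ≠ 0 := by positivity
    have := h2.mul_left (6 / Real.pi ^ 2)
    have heq : (6 / Real.pi ^ 2) * (Real.pi ^ 2 / 6) = 1 := by field_simp
    rw [heq] at this
    convert this using 2 with k
    · rfl
    · ring
  · exact h2
end
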